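/- arXiv:2001.01319 — 5 statements merged into one kernel-verified Lean document; each statement's English description precedes it below -/
import Mathlib

section
/- For any graph G, the orientation number o(G) equals the minimum cardinality of a family S of subgraphs of G such that the union of S is G and every member of S is a sidewalk (a graph in which every connected component contains at most one cycle). -/
def IsOrientation {V : Type*} (G : SimpleGraph V) (o : V → V → Prop) : Prop :=
  ∀ x y, G.Adj x y ↔ (o x y ∨ o y x)

/-- A sidewalk (pseudoforest): each connected component contains at most one
cycle, i.e. any two cycles within the same component have the same edges. -/
def IsSidewalk {V : Type*} (G : SimpleGraph V) : Prop :=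
  ∀ ⦃u v : V⦄ (c₁ : G.Walk u u) (c₂ : G.Walk v v),
    c₁.IsCycle → c₂.IsCycle → G.Reachable u v →
      {e | e ∈ c₁.edges} = {e | e ∈ c₂.edges}

open SimpleGraph

universe u

namespace SidewalkAux

variable {V : Type*} {G : SimpleGraph V}

/-- In a nontrivial closed walk, every support vertex is in the tail of the support. -/
lemma mem_tail_support_of_closed {u x : V} {c : G.Walk u u} (hnil : ¬c.Nil)
    (hx : x ∈ c.support) : x ∈ c.support.tail := by
  cases c with
  | nil => simp at hnil
  | cons h q =>
    simp only [Walk.support_cons, List.tail_cons]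
    rcases List.mem_cons.mp (by simpa using hx) with rfl | hxq
    · exact q.end_mem_support
    · exact hxq

/-- Counting: edges of a walk containing `z`, measured against occurrences of `z` in support. -/
lemma countP_edges_le {a b : V} (p : G.Walk a b) (z : V) [DecidableEq V]
    [DecidablePred (fun e : Sym2 V => z ∈ e)] :
    p.edges.countP (fun e => z ∈ e) + (if z = a then 1 else 0) + (if z = b then 1 else 0)
      ≤ 2 * p.support.count z := by
  induction p with
  | nil =>
    rename_i u
    simp only [Walk.edges_nil, List.countP_nil, Walk.support_nil]
    by_cases h : z = u <;> simp [h, List.count_cons]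
  | @cons a m b h q ih =>
    simp only [Walk.edges_cons, List.countP_cons, Walk.support_cons, List.count_cons,
      decide_eq_true_eq, beq_iff_eq, Sym2.mem_iff]
    have hne : a ≠ m := h.ne
    rcases eq_or_ne z a with rfl | h1 <;> rcases eq_or_ne z m with rfl | h2 <;>
      rcases eq_or_ne z b with h3 | h3 <;>
        simp_all [eq_comm] <;> omega

/-- A vertex belongs to at most two distinct edges of a cycle. -/
lemma IsCycle.not_three_edges {u z : V} {c : G.Walk u u} (hc : c.IsCycle)
    {e₁ e₂ e₃ : Sym2 V} (h12 : e₁ ≠ e₂) (h13 : e₁ ≠ e₃) (h23 : e₂ ≠ e₃)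
    (m1 : e₁ ∈ c.edges) (m2 : e₂ ∈ c.edges) (m3 : e₃ ∈ c.edges)
    (z1 : z ∈ e₁) (z2 : z ∈ e₂) (z3 : z ∈ e₃) : False := by
  classical
  have hcount := countP_edges_le c z
  -- countP ≥ 3
  have h3le : 3 ≤ c.edges.countP (fun e => z ∈ e) := by
    have hnd : (c.edges.filter (fun e => z ∈ e)).Nodup :=
      hc.isTrail.edges_nodup.filter _
    have hsub : ({e₁, e₂, e₃} : Finset (Sym2 V)) ⊆ (c.edges.filter (fun e => z ∈ e)).toFinset := by
      intro e he
      simp only [Finset.mem_insert, Finset.mem_singleton] at he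
      rcases he with rfl | rfl | rfl <;>
        simp_all [List.mem_toFinset, List.mem_filter]
    have hcard : ({e₁, e₂, e₃} : Finset (Sym2 V)).card = 3 := by
      rw [Finset.card_insert_of_notMem (by simp [h12, h13]),
        Finset.card_insert_of_notMem (by simp [h23]), Finset.card_singleton]
    calc 3 = ({e₁, e₂, e₃} : Finset (Sym2 V)).card := hcard.symm
      _ ≤ (c.edges.filter (fun e => z ∈ e)).toFinset.card := Finset.card_le_card hsub
      _ = (c.edges.filter (fun e => z ∈ e)).length := List.toFinset_card_of_nodup hnd
      _ = c.edges.countP (fun e => z ∈ e) := List.countP_eq_length_filter.symm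
  -- count z support
  have htail : c.support.tail.count z ≤ 1 := List.nodup_iff_count_le_one.mp hc.support_nodup z
  have hsupp : c.support.count z ≤ c.support.tail.count z + (if z = u then 1 else 0) := by
    conv_lhs => rw [c.support_eq_cons]
    rw [List.count_cons]
    rcases eq_or_ne z u with rfl | h
    · simp
    · simp [beq_iff_eq, if_neg h, if_neg (Ne.symm h)]
  by_cases h : z = u
  · subst h; simp only [if_pos rfl] at hcount hsupp; omega
  · simp only [if_neg h] at hcount hsupp; omega

/-- Crossing lemma: a walk from inside `O` to outside `O` uses an edge crossing `O`. -/
lemma exists_cross_edge {O : Set V} : ∀ {a b : V} (p : G.Walk a b), a ∈ O → b ∉ O →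
    ∃ x y, s(x, y) ∈ p.edges ∧ x ∈ O ∧ y ∉ O := by
  intro a b p
  induction p with
  | nil => intro ha hb; exact absurd ha hb
  | @cons a m b h q ih =>
    intro ha hb
    by_cases hm : m ∈ O
    · obtain ⟨x, y, hxy, hx, hy⟩ := ih hm hb
      exact ⟨x, y, by simp [hxy], hx, hy⟩
    · exact ⟨a, m, by simp, ha, hm⟩

/-- For a path from `x`, an edge of the path containing `x` must be the first edge. -/
lemma getVert_one_eq_of_mem_edges {x t y : V} {p : G.Walk x t} (hp : p.IsPath)
    (he : s(x, y) ∈ p.edges) : p.getVert 1 = y := by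
  cases p with
  | nil => simp at he
  | @cons a m b h q =>
    rw [Walk.edges_cons, List.mem_cons] at he
    rcases he with he | he
    · have hxm : y = m := by
        rcases Sym2.eq_iff.mp he with ⟨-, rfl⟩ | ⟨rfl, rfl⟩
        · rfl
        · exact absurd rfl h.ne
      simp [Walk.getVert_cons_succ, Walk.getVert_zero, hxm]
    · exfalso
      have : x ∈ q.support := q.fst_mem_support_of_mem_edges he
      exact ((Walk.cons_isPath_iff _ _).mp hp).2 this

/-- Every vertex of an open walk other than the final one is the `fst` of some dart. -/
lemma exists_dart_fst_of_ne : ∀ {m w x : V} (q : G.Walk m w), x ∈ q.support → x ≠ w →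
    ∃ d ∈ q.darts, d.fst = x := by
  intro m w x q
  induction q with
  | nil => intro hx hne; simp at hx; exact absurd hx hne
  | @cons a m' b h q ih =>
    intro hx hne
    rcases List.mem_cons.mp (by simpa using hx) with rfl | hxq
    · exact ⟨⟨(x, m'), h⟩, by simp, rfl⟩
    · obtain ⟨d, hd, hfst⟩ := ih hxq hne
      exact ⟨d, by simp [hd], hfst⟩

/-- Every support vertex of a nontrivial closed walk is the `fst` of some dart. -/
lemma exists_dart_fst_closed {u x : V} {c : G.Walk u u} (hnil : ¬c.Nil)
    (hx : x ∈ c.support) : ∃ d ∈ c.darts, d.fst = x := by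
  cases c with
  | nil => simp at hnil
  | @cons _ m _ h q =>
    rcases List.mem_cons.mp (by simpa using hx) with rfl | hxq
    · exact ⟨⟨(x, m), h⟩, by simp, rfl⟩
    · by_cases hxu : x = u
      · subst hxu
        exact ⟨⟨(x, m), h⟩, by simp, rfl⟩
      · obtain ⟨d, hd, hfst⟩ := exists_dart_fst_of_ne q hxq hxu
        exact ⟨d, by simp [hd], hfst⟩


/-! ### Functional orientations -/

def Functional {V : Type*} (o : V → V → Prop) : Prop := ∀ ⦃x y z⦄, o x y → o x z → y = z

variable {o : V → V → Prop}

open Classical in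
noncomputable def nxt (o : V → V → Prop) : V → V :=
  fun x => if h : ∃ y, o x y then h.choose else x

lemma nxt_eq (hfun : Functional o) {x y : V} (h : o x y) : nxt o x = y := by
  have he : ∃ y, o x y := ⟨y, h⟩
  unfold nxt
  rw [dif_pos he]
  exact hfun he.choose_spec h

lemma edge_repr (hor : IsOrientation G o) {a b : V} {p : G.Walk a b} :
    ∀ e ∈ p.edges, ∃ x y, e = s(x, y) ∧ o x y := by
  intro e he
  induction e using Sym2.ind with
  | _ a b =>
    have hadj : G.Adj a b := G.mem_edgeSet.mp (p.edges_subset_edgeSet he)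
    rcases (hor a b).mp hadj with h | h
    · exact ⟨a, b, rfl, h⟩
    · exact ⟨b, a, Sym2.eq_swap, h⟩

section Cycle

variable (hor : IsOrientation G o) (hasym : ∀ ⦃x y⦄, o x y → ¬o y x) (hfun : Functional o)
variable {u : V} {c : G.Walk u u} (hc : c.IsCycle)

include hor hfun hc in
lemma cycle_nxt (hasym : ∀ ⦃x y⦄, o x y → ¬o y x) :
    ∀ x ∈ c.support, o x (nxt o x) ∧ s(x, nxt o x) ∈ c.edges := by
  classical
  have hnil : ¬c.Nil := by
    rw [Walk.nil_iff_length_eq]; have := hc.three_le_length; omega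
  set E : Finset (Sym2 V) := c.edges.toFinset with hE
  set T : Finset V := c.support.tail.toFinset with hT
  have hEe : ∀ e, e ∈ E → e ∈ c.edges := fun e he => List.mem_toFinset.mp he
  choose xf yf hxy ho using fun (e : Sym2 V) (he : e ∈ E) => edge_repr hor e (hEe e he)
  have hmem : ∀ e he, xf e he ∈ T := by
    intro e he
    have hx : xf e he ∈ c.support := by
      apply c.fst_mem_support_of_mem_edges (u := yf e he)
      rw [← hxy e he]; exact hEe e he
    exact List.mem_toFinset.mpr (mem_tail_support_of_closed hnil hx)
  have hinj : ∀ e₁ e₂ he₁ he₂, xf e₁ he₁ = xf e₂ he₂ → e₁ = e₂ := by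
    intro e₁ e₂ he₁ he₂ hx
    have h1 : o (xf e₂ he₂) (yf e₁ he₁) := hx ▸ ho e₁ he₁
    have h2 := hfun h1 (ho e₂ he₂)
    rw [hxy e₁ he₁, hxy e₂ he₂, hx, h2]
  have hcards : T.card ≤ E.card := by
    have h1 : T.card = c.length := by
      rw [hT, List.toFinset_card_of_nodup hc.support_nodup, List.length_tail,
        Walk.length_support]
      omega
    have h2 : E.card = c.length := by
      rw [hE, List.toFinset_card_of_nodup hc.isTrail.edges_nodup, Walk.length_edges]
    omega
  have hsurj := Finset.surj_on_of_inj_on_of_card_le (s := E) (t := T)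
    (fun e he => xf e he) hmem hinj hcards
  intro x hx
  have hxT : x ∈ T := List.mem_toFinset.mpr (mem_tail_support_of_closed hnil hx)
  obtain ⟨e, he, hex⟩ := hsurj x hxT
  have hoy : o x (yf e he) := by rw [hex]; exact ho e he
  have hnxt : nxt o x = yf e he := nxt_eq hfun hoy
  refine ⟨by rw [hnxt]; exact hoy, ?_⟩
  have heq : s(x, nxt o x) = e := by rw [hnxt, hex, ← hxy e he]
  rw [heq]; exact hEe e he

include hor hasym hfun hc in
lemma cycle_edge_form : ∀ e ∈ c.edges, ∃ a ∈ c.support, e = s(a, nxt o a) := by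
  intro e he
  obtain ⟨x, y, rfl, hxy⟩ := edge_repr hor e he
  have hx : x ∈ c.support := c.fst_mem_support_of_mem_edges he
  exact ⟨x, hx, by rw [nxt_eq hfun hxy]⟩

include hor hasym hfun hc in
lemma cycle_edges_repr :
    {e | e ∈ c.edges} = (fun x => s(x, nxt o x)) '' {x | x ∈ c.support} := by
  ext e
  constructor
  · intro he
    obtain ⟨a, ha, rfl⟩ := cycle_edge_form hor hasym hfun hc e he
    exact ⟨a, ha, rfl⟩
  · rintro ⟨a, ha, rfl⟩
    exact (cycle_nxt hor hfun hc hasym a ha).2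

include hor hasym hfun hc in
lemma cycle_nxt_injOn :
    ∀ x₁ ∈ c.support, ∀ x₂ ∈ c.support, nxt o x₁ = nxt o x₂ → x₁ = x₂ := by
  intro x₁ h₁ x₂ h₂ heq
  by_contra hne
  obtain ⟨ho₁, he₁⟩ := cycle_nxt hor hfun hc hasym x₁ h₁
  obtain ⟨ho₂, he₂⟩ := cycle_nxt hor hfun hc hasym x₂ h₂
  set z := nxt o x₁ with hz
  have hz₂ : nxt o x₂ = z := heq.symm
  rw [hz₂] at ho₂ he₂
  have hzs : z ∈ c.support := c.snd_mem_support_of_mem_edges he₁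
  obtain ⟨hoz, hez⟩ := cycle_nxt hor hfun hc hasym z hzs
  have noloop : ∀ w : V, ¬ o w w := by
    intro w hw
    exact G.irrefl ((hor w w).mpr (Or.inl hw))
  have h12 : s(x₁, z) ≠ s(x₂, z) := by
    intro h
    rcases Sym2.eq_iff.mp h with ⟨h', -⟩ | ⟨h', h''⟩
    · exact hne h'
    · exact hne (h'.trans h'')
  have h13 : s(x₁, z) ≠ s(z, nxt o z) := by
    intro h
    rcases Sym2.eq_iff.mp h with ⟨h', -⟩ | ⟨h', -⟩
    · rw [h'] at ho₁; exact noloop z ho₁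
    · rw [h'] at ho₁; exact hasym hoz ho₁
  have h23 : s(x₂, z) ≠ s(z, nxt o z) := by
    intro h
    rcases Sym2.eq_iff.mp h with ⟨h', -⟩ | ⟨h', -⟩
    · rw [h'] at ho₂; exact noloop z ho₂
    · rw [h'] at ho₂; exact hasym hoz ho₂
  exact IsCycle.not_three_edges hc h12 h13 h23 he₁ he₂ hez
    (Sym2.mem_mk_right x₁ z) (Sym2.mem_mk_right x₂ z) (Sym2.mem_mk_left z (nxt o z))

end Cycle

/-! ### Orbits -/

def orbit (o : V → V → Prop) (x : V) : Set V := Set.range fun n => (nxt o)^[n] x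

lemma mem_orbit_self (x : V) : x ∈ orbit o x := ⟨0, rfl⟩

lemma nxt_mem_orbit {x a : V} (h : a ∈ orbit o x) : nxt o a ∈ orbit o x := by
  obtain ⟨n, rfl⟩ := h
  exact ⟨n + 1, Function.iterate_succ_apply' _ _ _⟩

lemma orbit_subset_of_mem {x y : V} (h : y ∈ orbit o x) : orbit o y ⊆ orbit o x := by
  obtain ⟨n, rfl⟩ := h
  rintro a ⟨m, rfl⟩
  exact ⟨m + n, Function.iterate_add_apply _ _ _ _⟩

lemma orbit_succ (x : V) : orbit o x = insert x (orbit o (nxt o x)) := by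
  ext a
  constructor
  · rintro ⟨n, rfl⟩
    cases n with
    | zero => exact Or.inl rfl
    | succ m => exact Or.inr ⟨m, (Function.iterate_succ_apply _ _ _).symm⟩
  · rintro (rfl | ⟨m, rfl⟩)
    · exact mem_orbit_self a
    · exact ⟨m + 1, Function.iterate_succ_apply _ _ _⟩

section CycleOrbit

variable (hor : IsOrientation G o) (hasym : ∀ ⦃x y⦄, o x y → ¬o y x) (hfun : Functional o)
variable {u : V} {c : G.Walk u u} (hc : c.IsCycle)

include hor hasym hfun hc in
lemma iter_mem_support : ∀ (a : V), a ∈ c.support → ∀ n, (nxt o)^[n] a ∈ c.support := by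
  intro a ha n
  induction n with
  | zero => exact ha
  | succ m ih =>
    rw [Function.iterate_succ_apply']
    exact c.snd_mem_support_of_mem_edges (cycle_nxt hor hfun hc hasym _ ih).2

include hor hasym hfun hc in
lemma iter_cancel : ∀ (i : ℕ) (a b : V), a ∈ c.support → b ∈ c.support →
    (nxt o)^[i] a = (nxt o)^[i] b → a = b := by
  intro i
  induction i with
  | zero => intro a b _ _ h; exact h
  | succ n ih =>
    intro a b ha hb h
    rw [Function.iterate_succ_apply', Function.iterate_succ_apply'] at h
    have := cycle_nxt_injOn hor hasym hfun hc _
      (iter_mem_support hor hasym hfun hc a ha n) _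
      (iter_mem_support hor hasym hfun hc b hb n) h
    exact ih a b ha hb this

include hor hasym hfun hc in
lemma exists_period : ∃ k, 0 < k ∧ (nxt o)^[k] u = u := by
  have hfin : {x | x ∈ c.support}.Finite := c.support.finite_toSet
  have hmaps : Set.MapsTo (fun n => (nxt o)^[n] u) (Set.univ : Set ℕ) {x | x ∈ c.support} :=
    fun n _ => iter_mem_support hor hasym hfun hc u c.start_mem_support n
  obtain ⟨i, -, j, -, hne, heq⟩ :=
    Set.infinite_univ.exists_ne_map_eq_of_mapsTo hmaps hfin
  rcases hne.lt_or_gt with hij | hij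
  · refine ⟨j - i, by omega, ?_⟩
    have : (nxt o)^[i] ((nxt o)^[j - i] u) = (nxt o)^[i] u := by
      rw [← Function.iterate_add_apply, (by omega : i + (j - i) = j)]
      exact heq.symm
    exact (iter_cancel hor hasym hfun hc i _ _
      (iter_mem_support hor hasym hfun hc u c.start_mem_support _) c.start_mem_support this)
  · refine ⟨i - j, by omega, ?_⟩
    have : (nxt o)^[j] ((nxt o)^[i - j] u) = (nxt o)^[j] u := by
      rw [← Function.iterate_add_apply, (by omega : j + (i - j) = i)]
      exact heq
    exact (iter_cancel hor hasym hfun hc j _ _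
      (iter_mem_support hor hasym hfun hc u c.start_mem_support _) c.start_mem_support this)

lemma orbit_eq_of_mem_of_period {x a : V} (hper : ∃ k, 0 < k ∧ (nxt o)^[k] x = x)
    (ha : a ∈ orbit o x) : orbit o a = orbit o x := by
  obtain ⟨k, hk, hx⟩ := hper
  refine le_antisymm (orbit_subset_of_mem ha) (orbit_subset_of_mem ?_)
  obtain ⟨n, rfl⟩ := ha
  have hiter : ∀ m, (nxt o)^[k * m] x = x := by
    intro m
    induction m with
    | zero => simp
    | succ l ih => rw [Nat.mul_succ, Function.iterate_add_apply, hx, ih]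
  have hge : n + 1 ≤ k * (n + 1) := Nat.le_mul_of_pos_left _ hk
  refine ⟨k * (n + 1) - n, ?_⟩
  show (nxt o)^[k * (n + 1) - n] ((nxt o)^[n] x) = x
  rw [← Function.iterate_add_apply, (by omega : k * (n + 1) - n + n = k * (n + 1)), hiter]

include hor hasym hfun hc in
lemma orbit_eq_support : orbit o u = {x | x ∈ c.support} := by
  classical
  have hsub : orbit o u ⊆ {x | x ∈ c.support} := by
    rintro a ⟨n, rfl⟩
    exact iter_mem_support hor hasym hfun hc u c.start_mem_support n
  refine le_antisymm hsub ?_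
  by_contra hcon
  obtain ⟨w, hw, hwo⟩ := Set.not_subset.mp hcon
  have hw : w ∈ c.support := hw
  obtain ⟨x, y, hxy, hxO, hyO⟩ :=
    exists_cross_edge (O := orbit o u) (c.takeUntil w hw) (mem_orbit_self u) hwo
  have hxy' : s(x, y) ∈ c.edges := c.edges_takeUntil_subset hw hxy
  obtain ⟨a, has, hform⟩ := cycle_edge_form hor hasym hfun hc _ hxy'
  obtain ⟨k, hkpos, hk⟩ := exists_period hor hasym hfun hc
  rcases Sym2.eq_iff.mp hform with ⟨rfl, rfl⟩ | ⟨hxn, rfl⟩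
  · exact hyO (nxt_mem_orbit hxO)
  · -- x = nxt a, y = a
    obtain ⟨n, hn⟩ := hxO
    -- find a predecessor of x inside the orbit
    have hpred : ∃ b, b ∈ orbit o u ∧ nxt o b = x := by
      cases n with
      | zero =>
        refine ⟨(nxt o)^[k - 1] u, ⟨k - 1, rfl⟩, ?_⟩
        rw [← Function.iterate_succ_apply' (nxt o) (k - 1) u]
        have hks : (k - 1).succ = k := by omega
        rw [hks, hk]
        simpa using hn
      | succ m =>
        refine ⟨(nxt o)^[m] u, ⟨m, rfl⟩, ?_⟩
        rw [← Function.iterate_succ_apply' (nxt o) m u]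
        simpa using hn
    obtain ⟨b, hbO, hbx⟩ := hpred
    have hbs : b ∈ c.support := hsub hbO
    have : y = b := by
      rw [hxn] at hbx
      exact cycle_nxt_injOn hor hasym hfun hc _ has _ hbs hbx.symm
    exact hyO (this ▸ hbO)

end CycleOrbit

section Reach

variable (hor : IsOrientation G o) (hasym : ∀ ⦃x y⦄, o x y → ¬o y x) (hfun : Functional o)

lemma reach_orbit_gen {W : Set V} (hfun : Functional o)
    (hclosed : ∀ a ∈ W, nxt o a ∈ W) (hcyclic : ∀ a ∈ W, W ⊆ orbit o a)
    (hor : IsOrientation G o) :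
    ∀ {x v : V} (p : G.Walk x v), W ⊆ orbit o v → W ⊆ orbit o x := by
  intro x v p
  induction p with
  | nil => exact id
  | @cons x m v h q ih =>
    intro hv
    have hm : W ⊆ orbit o m := ih hv
    rcases (hor x m).mp h with hxm | hmx
    · have hn : nxt o x = m := nxt_eq hfun hxm
      refine hm.trans ?_
      rw [orbit_succ x, hn]
      exact Set.subset_insert _ _
    · have hnm : nxt o m = x := nxt_eq hfun hmx
      by_cases hmW : m ∈ W
      · have hxW : x ∈ W := hnm ▸ hclosed m hmW
        exact hcyclic x hxW
      · intro a ha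
        have ham : a ∈ orbit o m := hm ha
        rw [orbit_succ m, hnm] at ham
        rcases ham with rfl | h'
        · exact absurd ha hmW
        · exact h'

include hor hasym hfun in
lemma reach_orbit {v : V} {c₂ : G.Walk v v} (hc₂ : c₂.IsCycle) {x : V} (p : G.Walk x v) :
    {a | a ∈ c₂.support} ⊆ orbit o x := by
  have hW : orbit o v = {a | a ∈ c₂.support} := orbit_eq_support hor hasym hfun hc₂
  have hper := exists_period hor hasym hfun hc₂
  refine reach_orbit_gen hfun ?_ ?_ hor p hW.ge
  · intro a ha
    exact c₂.snd_mem_support_of_mem_edges (cycle_nxt hor hfun hc₂ hasym a ha).2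
  · intro a ha
    have h1 : a ∈ orbit o v := by rw [hW]; exact ha
    have h2 : orbit o a = orbit o v := orbit_eq_of_mem_of_period hper h1
    rw [← hW, ← h2]

include hor hfun in
theorem functional_isSidewalk' : IsSidewalk G := by
  -- first make the orientation asymmetric
  classical
  set r := (WellOrderingRel : V → V → Prop) with hr
  have hasr : IsAsymm V r := inferInstance
  have htri : IsTrichotomous V r := inferInstance
  set o' : V → V → Prop := fun x y => o x y ∧ (o y x → r x y) with ho'
  have hor' : IsOrientation G o' := by
    intro x y
    constructor
    · intro hadj
      have hne : x ≠ y := G.ne_of_adj hadj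
      rcases (hor x y).mp hadj with h | h
      · by_cases h' : o y x
        · rcases (if h1 : r x y then Or.inl h1 else if h2 : r y x then Or.inr (Or.inr h2) else Or.inr (Or.inl (htri.trichotomous x y h1 h2)) : r x y ∨ x = y ∨ r y x) with hrxy | heq | hryx
          · exact Or.inl ⟨h, fun _ => hrxy⟩
          · exact absurd heq hne
          · exact Or.inr ⟨h', fun _ => hryx⟩
        · exact Or.inl ⟨h, fun hyx => absurd hyx h'⟩
      · by_cases h' : o x y
        · rcases (if h1 : r x y then Or.inl h1 else if h2 : r y x then Or.inr (Or.inr h2) else Or.inr (Or.inl (htri.trichotomous x y h1 h2)) : r x y ∨ x = y ∨ r y x) with hrxy | heq | hryx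
          · exact Or.inl ⟨h', fun _ => hrxy⟩
          · exact absurd heq hne
          · exact Or.inr ⟨h, fun _ => hryx⟩
        · exact Or.inr ⟨h, fun hxy => absurd hxy h'⟩
    · rintro (⟨h, -⟩ | ⟨h, -⟩)
      · exact (hor x y).mpr (Or.inl h)
      · exact ((hor y x).mpr (Or.inl h)).symm
  have hfun' : Functional o' := fun x y z hy hz => hfun hy.1 hz.1
  have hasym' : ∀ ⦃x y⦄, o' x y → ¬o' y x := by
    intro x y hxy hyx
    exact hasr.asymm _ _ (hxy.2 hyx.1) (hyx.2 hxy.1)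
  intro u v c₁ c₂ hc₁ hc₂ hreach
  obtain ⟨p⟩ := hreach
  have h1 : {a | a ∈ c₂.support} ⊆ orbit o' u := reach_orbit hor' hasym' hfun' hc₂ p
  have h2 : {a | a ∈ c₁.support} ⊆ orbit o' v := reach_orbit hor' hasym' hfun' hc₁ p.reverse
  have e1 : orbit o' u = {a | a ∈ c₁.support} := orbit_eq_support hor' hasym' hfun' hc₁
  have e2 : orbit o' v = {a | a ∈ c₂.support} := orbit_eq_support hor' hasym' hfun' hc₂
  have hsets : {a | a ∈ c₁.support} = {a | a ∈ c₂.support} := by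
    apply le_antisymm
    · rw [← e2]; exact h2
    · rw [← e1]; exact h1
  rw [cycle_edges_repr hor' hasym' hfun' hc₁, cycle_edges_repr hor' hasym' hfun' hc₂, hsets]

end Reach


section Construction

variable (G)

/-- The component `K` contains a cycle. -/
def hasCyc (K : G.ConnectedComponent) : Prop :=
  ∃ x, (∃ c : G.Walk x x, c.IsCycle) ∧ G.connectedComponentMk x = K

noncomputable def cycBase {K : G.ConnectedComponent} (h : hasCyc G K) : V := h.choose

noncomputable def cycWalk {K : G.ConnectedComponent} (h : hasCyc G K) :
    G.Walk (cycBase G h) (cycBase G h) := h.choose_spec.1.choose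

lemma cycWalk_isCycle {K : G.ConnectedComponent} (h : hasCyc G K) :
    (cycWalk G h).IsCycle := h.choose_spec.1.choose_spec

lemma cycBase_mk {K : G.ConnectedComponent} (h : hasCyc G K) :
    G.connectedComponentMk (cycBase G h) = K := h.choose_spec.2

lemma cycWalk_not_nil {K : G.ConnectedComponent} (h : hasCyc G K) : ¬(cycWalk G h).Nil := by
  rw [Walk.nil_iff_length_eq]
  have := (cycWalk_isCycle G h).three_le_length
  omega

/-- The successor of a vertex on the chosen cycle for its component. -/
noncomputable def cnext {K : G.ConnectedComponent} (h : hasCyc G K) (w : V)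
    (hw : w ∈ (cycWalk G h).support) : V :=
  (exists_dart_fst_closed (cycWalk_not_nil G h) hw).choose.snd

lemma cnext_spec {K : G.ConnectedComponent} (h : hasCyc G K) (w : V)
    (hw : w ∈ (cycWalk G h).support) :
    ∃ d ∈ (cycWalk G h).darts, d.fst = w ∧ d.snd = cnext G h w hw := by
  obtain ⟨hd, hfst⟩ := (exists_dart_fst_closed (cycWalk_not_nil G h) hw).choose_spec
  exact ⟨_, hd, hfst, rfl⟩

lemma cnext_adj {K : G.ConnectedComponent} (h : hasCyc G K) (w : V)
    (hw : w ∈ (cycWalk G h).support) : G.Adj w (cnext G h w hw) := by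
  obtain ⟨d, _, hfst, hsnd⟩ := cnext_spec G h w hw
  have := d.adj
  rw [hfst, hsnd] at this
  exact this

lemma cnext_edge_mem {K : G.ConnectedComponent} (h : hasCyc G K) (w : V)
    (hw : w ∈ (cycWalk G h).support) : s(w, cnext G h w hw) ∈ (cycWalk G h).edges := by
  obtain ⟨d, hd, hfst, hsnd⟩ := cnext_spec G h w hw
  have h1 : d.edge = s(d.toProd.1, d.toProd.2) := rfl
  have h2 : s(d.toProd.1, d.toProd.2) = s(w, cnext G h w hw) := by rw [hfst, hsnd]
  rw [← h2, ← h1]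
  exact List.mem_map.mpr ⟨d, hd, rfl⟩

/-- Every edge of the chosen cycle has the form `s(w, cnext w)`. -/
lemma cnext_surj {K : G.ConnectedComponent} (h : hasCyc G K) :
    ∀ e ∈ (cycWalk G h).edges, ∃ w, ∃ hw : w ∈ (cycWalk G h).support,
      e = s(w, cnext G h w hw) := by
  classical
  intro e he
  set c := cycWalk G h with hcdef
  have hc : c.IsCycle := cycWalk_isCycle G h
  have hnil : ¬c.Nil := cycWalk_not_nil G h
  set E : Finset (Sym2 V) := c.edges.toFinset with hE
  set T : Finset V := c.support.tail.toFinset with hT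
  have hTsup : ∀ w, w ∈ T → w ∈ c.support := fun w hw =>
    List.mem_of_mem_tail (List.mem_toFinset.mp hw)
  have hmaps : ∀ w (hw : w ∈ T), s(w, cnext G h w (hTsup w hw)) ∈ E :=
    fun w hw => List.mem_toFinset.mpr (cnext_edge_mem G h w (hTsup w hw))
  have hinj : ∀ w₁ w₂ (hw₁ : w₁ ∈ T) (hw₂ : w₂ ∈ T),
      s(w₁, cnext G h w₁ (hTsup w₁ hw₁)) = s(w₂, cnext G h w₂ (hTsup w₂ hw₂)) → w₁ = w₂ := by
    intro w₁ w₂ hw₁ hw₂ heq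
    by_cases hne : w₁ = w₂
    · exact hne
    obtain ⟨d₁, hd₁, hfst₁, hsnd₁⟩ := cnext_spec G h w₁ (hTsup w₁ hw₁)
    obtain ⟨d₂, hd₂, hfst₂, hsnd₂⟩ := cnext_spec G h w₂ (hTsup w₂ hw₂)
    rcases Sym2.eq_iff.mp heq with ⟨h1, -⟩ | ⟨h1, h2⟩
    · exact absurd h1 hne
    · -- w₁ = cnext w₂ and cnext w₁ = w₂ : two opposite darts with the same edge
      exfalso
      have hedge : d₁.edge = d₂.edge := by
        show s(d₁.fst, d₁.snd) = s(d₂.fst, d₂.snd)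
        rw [hfst₁, hfst₂, hsnd₁, hsnd₂, ← h1, ← h2, Sym2.eq_swap]
      have hnodup : (c.darts.map SimpleGraph.Dart.edge).Nodup := hc.isTrail.edges_nodup
      have := List.inj_on_of_nodup_map hnodup hd₁ hd₂ hedge
      apply hne
      rw [← hfst₁, ← hfst₂, this]
  have hcards : E.card ≤ T.card := by
    have h1 : T.card = c.length := by
      rw [hT, List.toFinset_card_of_nodup hc.support_nodup, List.length_tail,
        Walk.length_support]
      omega
    have h2 : E.card = c.length := by
      rw [hE, List.toFinset_card_of_nodup hc.isTrail.edges_nodup, Walk.length_edges]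
    omega
  have hsurj := Finset.surj_on_of_inj_on_of_card_le (s := T) (t := E)
    (fun w hw => s(w, cnext G h w (hTsup w hw))) hmaps hinj hcards
  obtain ⟨w, hw, hform⟩ := hsurj e (List.mem_toFinset.mpr he)
  exact ⟨w, hTsup w hw, hform⟩

lemma mk_eq_of_mem_support {a b x : V} {p : G.Walk a b} (hx : x ∈ p.support) :
    G.connectedComponentMk x = G.connectedComponentMk a := by
  classical
  exact ConnectedComponent.sound ⟨(p.takeUntil x hx).reverse⟩

open Classical in
/-- The target set for each component: the chosen cycle's support, or the chosen root. -/
noncomputable def Tset (K : G.ConnectedComponent) : Set V :=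
  if h : hasCyc G K then {a | a ∈ (cycWalk G h).support} else {Quot.out K}

lemma Tset_cyc {K : G.ConnectedComponent} (h : hasCyc G K) :
    Tset G K = {a | a ∈ (cycWalk G h).support} := by unfold Tset; rw [dif_pos h]

lemma Tset_tree {K : G.ConnectedComponent} (h : ¬hasCyc G K) :
    Tset G K = {Quot.out K} := by unfold Tset; rw [dif_neg h]

lemma Tset_mk {K : G.ConnectedComponent} {t : V} (ht : t ∈ Tset G K) :
    G.connectedComponentMk t = K := by
  by_cases h : hasCyc G K
  · rw [Tset_cyc G h] at ht
    have ht' : t ∈ (cycWalk G h).support := ht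
    exact (mk_eq_of_mem_support G ht').trans (cycBase_mk G h)
  · rw [Tset_tree G h] at ht
    rw [ht]
    exact Quot.out_eq K

lemma Tset_nonempty (x : V) : ∃ t, t ∈ Tset G (G.connectedComponentMk x) := by
  by_cases h : hasCyc G (G.connectedComponentMk x)
  · exact ⟨cycBase G h, by rw [Tset_cyc G h]; exact (cycWalk G h).start_mem_support⟩
  · exact ⟨_, by rw [Tset_tree G h]; rfl⟩

def dSet (x : V) : Set ℕ :=
  {n | ∃ t, t ∈ Tset G (G.connectedComponentMk x) ∧ ∃ w : G.Walk x t, w.length = n}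

lemma dSet_nonempty (x : V) : (dSet G x).Nonempty := by
  obtain ⟨t, ht⟩ := Tset_nonempty G x
  have hreach : G.Reachable x t := (ConnectedComponent.exact (Tset_mk G ht)).symm
  obtain ⟨p⟩ := hreach
  exact ⟨p.length, t, ht, p, rfl⟩

noncomputable def dmin (x : V) : ℕ := sInf (dSet G x)

lemma exists_pwalk (x : V) : ∃ t, ∃ _ : t ∈ Tset G (G.connectedComponentMk x),
    ∃ w : G.Walk x t, w.IsPath ∧ w.length = dmin G x := by
  classical
  have hmem : dmin G x ∈ dSet G x := Nat.sInf_mem (dSet_nonempty G x)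
  obtain ⟨t, ht, w, hw⟩ := hmem
  refine ⟨t, ht, w.bypass, w.bypass_isPath, le_antisymm ?_ ?_⟩
  · rw [← hw]; exact w.length_bypass_le
  · exact Nat.sInf_le ⟨t, ht, w.bypass, rfl⟩

noncomputable def ptgt (x : V) : V := (exists_pwalk G x).choose

noncomputable def pwalk (x : V) : G.Walk x (ptgt G x) :=
  (exists_pwalk G x).choose_spec.2.choose

lemma ptgt_mem (x : V) : ptgt G x ∈ Tset G (G.connectedComponentMk x) :=
  (exists_pwalk G x).choose_spec.1

lemma pwalk_isPath (x : V) : (pwalk G x).IsPath :=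
  (exists_pwalk G x).choose_spec.2.choose_spec.1

lemma pwalk_not_nil {x : V} (hx : x ∉ Tset G (G.connectedComponentMk x)) :
    ¬(pwalk G x).Nil := by
  refine Walk.not_nil_of_ne (fun heq => hx ?_)
  have := ptgt_mem G x
  rw [← heq] at this
  exact this

open Classical in
/-- The orientation: out-neighbour of each vertex. -/
noncomputable def fo (x : V) : Option V :=
  if h : hasCyc G (G.connectedComponentMk x) then
    if hx : x ∈ (cycWalk G h).support then some (cnext G h x hx)
    else some ((pwalk G x).getVert 1)
  else if x = Quot.out (G.connectedComponentMk x) then none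
  else some ((pwalk G x).getVert 1)

lemma fo_cyc {x : V} {K : G.ConnectedComponent} (hK : G.connectedComponentMk x = K)
    (h : hasCyc G K) (hx : x ∈ (cycWalk G h).support) :
    fo G x = some (cnext G h x hx) := by
  subst hK
  unfold fo
  rw [dif_pos h, dif_pos hx]

lemma fo_cyc_path {x : V} {K : G.ConnectedComponent} (hK : G.connectedComponentMk x = K)
    (h : hasCyc G K) (hx : x ∉ (cycWalk G h).support) :
    fo G x = some ((pwalk G x).getVert 1) := by
  subst hK
  unfold fo
  rw [dif_pos h, dif_neg hx]

lemma fo_tree {x : V} {K : G.ConnectedComponent} (hK : G.connectedComponentMk x = K)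
    (h : ¬hasCyc G K) (hx : x ≠ Quot.out K) :
    fo G x = some ((pwalk G x).getVert 1) := by
  subst hK
  unfold fo
  rw [dif_neg h, if_neg hx]

lemma fo_adj {x y : V} (h : fo G x = some y) : G.Adj x y := by
  by_cases hc : hasCyc G (G.connectedComponentMk x)
  · by_cases hx : x ∈ (cycWalk G hc).support
    · rw [fo_cyc G rfl hc hx] at h
      exact Option.some.inj h ▸ cnext_adj G hc x hx
    · rw [fo_cyc_path G rfl hc hx] at h
      have hnil : ¬(pwalk G x).Nil := pwalk_not_nil G (by rw [Tset_cyc G hc]; exact hx)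
      exact Option.some.inj h ▸ ((pwalk G x).adj_snd hnil : G.Adj x ((pwalk G x).getVert 1))
  · by_cases hx : x = Quot.out (G.connectedComponentMk x)
    · exfalso
      unfold fo at h
      rw [dif_neg hc, if_pos hx] at h
      cases h
    · rw [fo_tree G rfl hc hx] at h
      have hnil : ¬(pwalk G x).Nil := pwalk_not_nil G (by
        rw [Tset_tree G hc]
        simpa using hx)
      exact Option.some.inj h ▸ ((pwalk G x).adj_snd hnil : G.Adj x ((pwalk G x).getVert 1))


lemma mem_support_rotate {u w z : V} {c : G.Walk u u} [DecidableEq V] (hnil : ¬c.Nil)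
    (hw : w ∈ c.support) (hz : z ∈ c.support) : z ∈ (c.rotate _ hw).support := by
  have h1 : z ∈ c.support.tail := mem_tail_support_of_closed hnil hz
  have h2 := Walk.support_rotate c _ hw
  exact List.mem_of_mem_tail (h2.mem_iff.mpr h1)

lemma mem_edges_rotate {u w : V} {c : G.Walk u u} [DecidableEq V] {e : Sym2 V}
    (hw : w ∈ c.support) (he : e ∈ (c.rotate _ hw).edges) : e ∈ c.edges :=
  (Walk.rotate_edges c _ hw).mem_iff.mp he

theorem fo_cover (hs : IsSidewalk G) {x y : V} (hadj : G.Adj x y) :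
    fo G x = some y ∨ fo G y = some x := by
  classical
  by_contra hcon
  push_neg at hcon
  obtain ⟨hfx, hfy⟩ := hcon
  have hKxy : G.connectedComponentMk y = G.connectedComponentMk x :=
    ConnectedComponent.sound hadj.symm.reachable
  have mkcycle : ∀ Wk : G.Walk x y, s(x, y) ∉ Wk.edges →
      ∃ c₃ : G.Walk y y, c₃.IsCycle ∧ s(y, x) ∈ c₃.edges := by
    intro Wk hW
    refine ⟨Walk.cons hadj.symm Wk.bypass, ?_, by simp⟩
    rw [Walk.cons_isCycle_iff]
    refine ⟨Wk.bypass_isPath, ?_⟩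
    rw [Sym2.eq_swap]
    exact fun hmem => hW (Wk.edges_bypass_subset hmem)
  have mkcycle' : ∀ Wk : G.Walk y x, s(x, y) ∉ Wk.edges →
      ∃ c₃ : G.Walk x x, c₃.IsCycle ∧ s(x, y) ∈ c₃.edges := by
    intro Wk hW
    refine ⟨Walk.cons hadj Wk.bypass, ?_, by simp⟩
    rw [Walk.cons_isCycle_iff]
    exact ⟨Wk.bypass_isPath, fun hmem => hW (Wk.edges_bypass_subset hmem)⟩
  by_cases hcy : hasCyc G (G.connectedComponentMk x)
  · -- the component has a cycle
    have hγc : (cycWalk G hcy).IsCycle := cycWalk_isCycle G hcy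
    have hγnil : ¬(cycWalk G hcy).Nil := cycWalk_not_nil G hcy
    have edges_eq : ∀ (z : V) (c₃ : G.Walk z z), c₃.IsCycle →
        G.connectedComponentMk z = G.connectedComponentMk x →
        {e | e ∈ c₃.edges} = {e | e ∈ (cycWalk G hcy).edges} := by
      intro z c₃ h3 hz
      exact hs c₃ (cycWalk G hcy) h3 hγc
        (ConnectedComponent.exact (hz.trans (cycBase_mk G hcy).symm))
    by_cases he : s(x, y) ∈ (cycWalk G hcy).edges
    · obtain ⟨w, hw, hform⟩ := cnext_surj G hcy _ he
      rcases Sym2.eq_iff.mp hform with ⟨h1, h2⟩ | ⟨h1, h2⟩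
      · subst h1
        apply hfx
        rw [fo_cyc G rfl hcy hw, ← h2]
      · subst h2
        apply hfy
        rw [fo_cyc G hKxy hcy hw, ← h1]
    · have finalize : (∃ c₃ : G.Walk y y, c₃.IsCycle ∧ s(y, x) ∈ c₃.edges) ∨
          (∃ c₃ : G.Walk x x, c₃.IsCycle ∧ s(x, y) ∈ c₃.edges) → False := by
        rintro (⟨c₃, h3, hmem⟩ | ⟨c₃, h3, hmem⟩)
        · have hset := edges_eq y c₃ h3 hKxy
          have hx' : s(y, x) ∈ (cycWalk G hcy).edges := (Set.ext_iff.mp hset _).mp hmem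
          rw [Sym2.eq_swap] at hx'
          exact he hx'
        · have hset := edges_eq x c₃ h3 rfl
          exact he ((Set.ext_iff.mp hset _).mp hmem)
      by_cases hxs : x ∈ (cycWalk G hcy).support <;>
        by_cases hys : y ∈ (cycWalk G hcy).support
      · -- both on the cycle
        have hyt : y ∈ ((cycWalk G hcy).rotate _ hxs).support :=
          mem_support_rotate G hγnil hxs hys
        have hW : s(x, y) ∉ (((cycWalk G hcy).rotate _ hxs).takeUntil y hyt).edges :=
          fun hmem => he (mem_edges_rotate G hxs (Walk.edges_takeUntil_subset _ hyt hmem))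
        exact finalize (Or.inl (mkcycle _ hW))
      · -- x on the cycle, y off it
        have hty : ptgt G y ∈ (cycWalk G hcy).support := by
          have := ptgt_mem G y
          rw [hKxy, Tset_cyc G hcy] at this
          exact this
        have htyr : ptgt G y ∈ ((cycWalk G hcy).rotate _ hxs).support :=
          mem_support_rotate G hγnil hxs hty
        have hW : s(x, y) ∉
            ((((cycWalk G hcy).rotate _ hxs).takeUntil (ptgt G y) htyr).append
              (pwalk G y).reverse).edges := by
          intro hmem
          rw [Walk.edges_append, List.mem_append] at hmem
          rcases hmem with hmem | hmem
          · exact he (mem_edges_rotate G hxs (Walk.edges_takeUntil_subset _ htyr hmem))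
          · rw [Walk.edges_reverse, List.mem_reverse] at hmem
            have hg : (pwalk G y).getVert 1 = x :=
              getVert_one_eq_of_mem_edges (pwalk_isPath G y) (by rwa [Sym2.eq_swap] at hmem)
            apply hfy
            rw [fo_cyc_path G hKxy hcy hys, hg]
        exact finalize (Or.inl (mkcycle _ hW))
      · -- y on the cycle, x off it
        have htx : ptgt G x ∈ (cycWalk G hcy).support := by
          have := ptgt_mem G x
          rw [Tset_cyc G hcy] at this
          exact this
        have htxr : ptgt G x ∈ ((cycWalk G hcy).rotate _ hys).support :=
          mem_support_rotate G hγnil hys htx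
        have hW : s(x, y) ∉
            ((((cycWalk G hcy).rotate _ hys).takeUntil (ptgt G x) htxr).append
              (pwalk G x).reverse).edges := by
          intro hmem
          rw [Walk.edges_append, List.mem_append] at hmem
          rcases hmem with hmem | hmem
          · exact he (mem_edges_rotate G hys (Walk.edges_takeUntil_subset _ htxr hmem))
          · rw [Walk.edges_reverse, List.mem_reverse] at hmem
            have hg : (pwalk G x).getVert 1 = y :=
              getVert_one_eq_of_mem_edges (pwalk_isPath G x) hmem
            apply hfx
            rw [fo_cyc_path G rfl hcy hxs, hg]
        exact finalize (Or.inr (mkcycle' _ hW))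
      · -- both off the cycle
        have htx : ptgt G x ∈ (cycWalk G hcy).support := by
          have := ptgt_mem G x
          rw [Tset_cyc G hcy] at this
          exact this
        have hty : ptgt G y ∈ (cycWalk G hcy).support := by
          have := ptgt_mem G y
          rw [hKxy, Tset_cyc G hcy] at this
          exact this
        have htyr : ptgt G y ∈ ((cycWalk G hcy).rotate _ htx).support :=
          mem_support_rotate G hγnil htx hty
        have hW : s(x, y) ∉
            ((pwalk G x).append
              ((((cycWalk G hcy).rotate _ htx).takeUntil (ptgt G y) htyr).append
                (pwalk G y).reverse)).edges := by
          intro hmem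
          rw [Walk.edges_append, List.mem_append, Walk.edges_append, List.mem_append] at hmem
          rcases hmem with hmem | hmem | hmem
          · have hg : (pwalk G x).getVert 1 = y :=
              getVert_one_eq_of_mem_edges (pwalk_isPath G x) hmem
            apply hfx
            rw [fo_cyc_path G rfl hcy hxs, hg]
          · exact he (mem_edges_rotate G htx (Walk.edges_takeUntil_subset _ htyr hmem))
          · rw [Walk.edges_reverse, List.mem_reverse] at hmem
            have hg : (pwalk G y).getVert 1 = x :=
              getVert_one_eq_of_mem_edges (pwalk_isPath G y) (by rwa [Sym2.eq_swap] at hmem)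
            apply hfy
            rw [fo_cyc_path G hKxy hcy hys, hg]
        exact finalize (Or.inl (mkcycle _ hW))
  · -- the component has no cycle
    have nocycle : ∀ (z : V) (c₃ : G.Walk z z), c₃.IsCycle →
        G.connectedComponentMk z = G.connectedComponentMk x → False := by
      intro z c₃ h3 hz
      exact hcy ⟨z, ⟨c₃, h3⟩, hz⟩
    have htgtx : ptgt G x = Quot.out (G.connectedComponentMk x) := by
      have := ptgt_mem G x
      rw [Tset_tree G hcy] at this
      exact this
    have htgty : ptgt G y = Quot.out (G.connectedComponentMk x) := by
      have := ptgt_mem G y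
      rw [hKxy, Tset_tree G hcy] at this
      exact this
    by_cases hxr : x = Quot.out (G.connectedComponentMk x) <;>
      by_cases hyr : y = Quot.out (G.connectedComponentMk x)
    · exact hadj.ne (hxr.trans hyr.symm)
    · have hW : s(x, y) ∉ ((pwalk G y).reverse.copy (htgty.trans hxr.symm) rfl).edges := by
        intro hmem
        rw [Walk.edges_copy, Walk.edges_reverse, List.mem_reverse] at hmem
        have hg : (pwalk G y).getVert 1 = x :=
          getVert_one_eq_of_mem_edges (pwalk_isPath G y) (by rwa [Sym2.eq_swap] at hmem)
        apply hfy
        rw [fo_tree G hKxy hcy hyr, hg]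
      obtain ⟨c₃, h3, -⟩ := mkcycle _ hW
      exact nocycle y c₃ h3 hKxy
    · have hW : s(x, y) ∉ ((pwalk G x).reverse.copy (htgtx.trans hyr.symm) rfl).edges := by
        intro hmem
        rw [Walk.edges_copy, Walk.edges_reverse, List.mem_reverse] at hmem
        have hg : (pwalk G x).getVert 1 = y :=
          getVert_one_eq_of_mem_edges (pwalk_isPath G x) hmem
        apply hfx
        rw [fo_tree G rfl hcy hxr, hg]
      obtain ⟨c₃, h3, -⟩ := mkcycle' _ hW
      exact nocycle x c₃ h3 rfl
    · have hW : s(x, y) ∉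
          ((pwalk G x).append ((pwalk G y).reverse.copy (htgty.trans htgtx.symm) rfl)).edges := by
        intro hmem
        rw [Walk.edges_append, List.mem_append] at hmem
        rcases hmem with hmem | hmem
        · have hg : (pwalk G x).getVert 1 = y :=
            getVert_one_eq_of_mem_edges (pwalk_isPath G x) hmem
          apply hfx
          rw [fo_tree G rfl hcy hxr, hg]
        · rw [Walk.edges_copy, Walk.edges_reverse, List.mem_reverse] at hmem
          have hg : (pwalk G y).getVert 1 = x :=
            getVert_one_eq_of_mem_edges (pwalk_isPath G y) (by rwa [Sym2.eq_swap] at hmem)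
          apply hfy
          rw [fo_tree G hKxy hcy hyr, hg]
      obtain ⟨c₃, h3, -⟩ := mkcycle _ hW
      exact nocycle y c₃ h3 hKxy

theorem sidewalk_functional (hs : IsSidewalk G) :
    ∃ o : V → V → Prop, IsOrientation G o ∧ Functional o := by
  refine ⟨fun a b => fo G a = some b, ?_, ?_⟩
  · intro a b
    constructor
    · intro h
      exact fo_cover G hs h
    · rintro (h | h)
      · exact fo_adj G h
      · exact (fo_adj G h).symm
  · intro a b c hb hc
    exact Option.some.inj (hb.symm.trans hc)

end Construction



end SidewalkAux

namespace SidewalkAux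

variable {V : Type*} {G : SimpleGraph V}

/-- No cycles in a single-edge graph. -/
lemma no_cycle_single_edge {e : Sym2 V} {H : SimpleGraph V}
    (hsub : ∀ e' ∈ H.edgeSet, e' = e) {u : V} (c : H.Walk u u) (hc : c.IsCycle) : False := by
  have h3 := hc.three_le_length
  have hnodup := hc.isTrail.edges_nodup
  have hlen : c.edges.length = c.length := Walk.length_edges c
  rcases hedges : c.edges with _ | ⟨e₁, l⟩
  · rw [hedges] at hlen; simp at hlen; omega
  rcases l with _ | ⟨e₂, rest⟩
  · rw [hedges] at hlen; simp at hlen; omega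
  have h1 : e₁ ∈ c.edges := by rw [hedges]; simp
  have h2 : e₂ ∈ c.edges := by rw [hedges]; simp
  have he₁ : e₁ = e := hsub _ (c.edges_subset_edgeSet h1)
  have he₂ : e₂ = e := hsub _ (c.edges_subset_edgeSet h2)
  rw [hedges] at hnodup
  rcases List.nodup_cons.mp hnodup with ⟨hne, -⟩
  exact hne (by rw [he₁, he₂]; simp)

end SidewalkAux

open SidewalkAux in
/-- The orientation number of `G` equals the minimum cardinality of a family of
sidewalk subgraphs of `G` whose union is `G`. -/
theorem orientation_number_eq_sidewalk_cover {V : Type u} (G : SimpleGraph V) :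
    sInf {c : Cardinal.{u} | ∃ o : V → V → Prop, IsOrientation G o ∧
        ∀ x, Cardinal.mk {y // o x y} ≤ c}
      = sInf {c : Cardinal.{u} | ∃ S : Set (SimpleGraph V),
          (∀ H ∈ S, H ≤ G ∧ IsSidewalk H) ∧ sSup S = G ∧ Cardinal.mk S = c} := by
  classical
  set LHS := {c : Cardinal.{u} | ∃ o : V → V → Prop, IsOrientation G o ∧
      ∀ x, Cardinal.mk {y // o x y} ≤ c} with hLHS
  set RHS := {c : Cardinal.{u} | ∃ S : Set (SimpleGraph V),
      (∀ H ∈ S, H ≤ G ∧ IsSidewalk H) ∧ sSup S = G ∧ Cardinal.mk S = c} with hRHS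
  -- LHS is nonempty
  have hLne : LHS.Nonempty := by
    refine ⟨Cardinal.mk V, G.Adj, fun x y => ⟨Or.inl, ?_⟩, fun x => Cardinal.mk_subtype_le _⟩
    rintro (h | h)
    · exact h
    · exact h.symm
  -- RHS is nonempty : cover by single edges
  have hRne : RHS.Nonempty := by
    set S₀ : Set (SimpleGraph V) := (fun e => SimpleGraph.fromEdgeSet {e}) '' G.edgeSet with hS₀
    refine ⟨Cardinal.mk S₀, S₀, ?_, ?_, rfl⟩
    · rintro H ⟨e, heG, rfl⟩
      constructor
      · intro a b hab
        rw [SimpleGraph.fromEdgeSet_adj] at hab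
        obtain ⟨hmem, -⟩ := hab
        rw [Set.mem_singleton_iff] at hmem
        rw [← SimpleGraph.mem_edgeSet, hmem]
        exact heG
      · intro u v c₁ c₂ h₁ h₂ hr
        exfalso
        refine no_cycle_single_edge (e := e) ?_ c₁ h₁
        intro e' he'
        rw [SimpleGraph.edgeSet_fromEdgeSet, Set.mem_diff] at he'
        exact Set.mem_singleton_iff.mp he'.1
    · apply le_antisymm
      · apply sSup_le
        rintro H ⟨e, heG, rfl⟩
        intro a b hab
        rw [SimpleGraph.fromEdgeSet_adj] at hab
        obtain ⟨hmem, -⟩ := hab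
        rw [Set.mem_singleton_iff] at hmem
        rw [← SimpleGraph.mem_edgeSet, hmem]
        exact heG
      · intro a b hab
        rw [SimpleGraph.sSup_adj]
        refine ⟨SimpleGraph.fromEdgeSet {s(a, b)}, ⟨s(a, b), hab, rfl⟩, ?_⟩
        rw [SimpleGraph.fromEdgeSet_adj]
        exact ⟨rfl, hab.ne⟩
  apply le_antisymm
  · -- sInf LHS ≤ sInf RHS
    apply le_csInf hRne
    rintro c ⟨S, hSside, hSsup, rfl⟩
    apply csInf_le (OrderBot.bddBelow _)
    -- build an orientation from the sidewalk cover S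
    have hexists : ∀ H : S, ∃ o : V → V → Prop,
        IsOrientation (H : SimpleGraph V) o ∧ Functional o :=
      fun H => sidewalk_functional (H : SimpleGraph V) (hSside H H.2).2
    choose oH horH hfH using hexists
    have assign : ∀ e : G.edgeSet, ∃ H : S, (e : Sym2 V) ∈ (H : SimpleGraph V).edgeSet := by
      rintro ⟨e, he⟩
      induction e using Sym2.ind with
      | _ a b =>
        have : G.Adj a b := G.mem_edgeSet.mp he
        rw [← hSsup, SimpleGraph.sSup_adj] at this
        obtain ⟨H, hHS, hadj⟩ := this
        exact ⟨⟨H, hHS⟩, hadj⟩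
    choose F hF using assign
    set o₀ : V → V → Prop := fun a b =>
      ∃ h : G.Adj a b, oH (F ⟨s(a, b), G.mem_edgeSet.mpr h⟩) a b with ho₀
    have hFsymm : ∀ {a b : V} (h : G.Adj a b),
        F ⟨s(a, b), G.mem_edgeSet.mpr h⟩ = F ⟨s(b, a), G.mem_edgeSet.mpr h.symm⟩ := by
      intro a b h
      congr 1
      exact Subtype.ext Sym2.eq_swap
    refine ⟨o₀, ?_, ?_⟩
    · intro a b
      constructor
      · intro hadj
        set H := F ⟨s(a, b), G.mem_edgeSet.mpr hadj⟩ with hH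
        have hHadj : (H : SimpleGraph V).Adj a b :=
          (SimpleGraph.mem_edgeSet (H : SimpleGraph V)).mp (hF ⟨s(a, b), G.mem_edgeSet.mpr hadj⟩)
        rcases (horH H a b).mp hHadj with h | h
        · exact Or.inl ⟨hadj, h⟩
        · refine Or.inr ⟨hadj.symm, ?_⟩
          rw [← hFsymm hadj]
          exact h
      · rintro (⟨h, -⟩ | ⟨h, -⟩)
        · exact h
        · exact h.symm
    · -- outdegree bound
      intro x
      have hinj : Function.Injective
          (fun y : {y // o₀ x y} => F ⟨s(x, y.1), G.mem_edgeSet.mpr y.2.choose⟩) := by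
        rintro ⟨y₁, hy₁⟩ ⟨y₂, hy₂⟩ heq
        simp only at heq
        have ho₁ := hy₁.choose_spec
        have ho₂ := hy₂.choose_spec
        have := hfH _ ho₁ (by rw [heq]; exact ho₂)
        exact Subtype.ext this
      exact Cardinal.mk_le_of_injective hinj
  · -- sInf RHS ≤ sInf LHS
    apply le_csInf hLne
    rintro c ⟨o, hor, hbound⟩
    have hno : ∀ a, ¬o a a := fun a haa => G.irrefl ((hor a a).mpr (Or.inl haa))
    -- embed out-neighbourhoods into c.out
    have hemb : ∀ x, Nonempty ({y // o x y} ↪ c.out) := by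
      intro x
      rw [← Cardinal.le_def]
      rw [Cardinal.mk_out]
      exact hbound x
    have g : ∀ x, {y // o x y} ↪ c.out := fun x => (hemb x).some
    set Hf : c.out → SimpleGraph V := fun i =>
      { Adj := fun a b => (∃ h : o a b, g a ⟨b, h⟩ = i) ∨ (∃ h : o b a, g b ⟨a, h⟩ = i)
        symm := by
          constructor
          intro a b hab
          tauto
        loopless := by
          constructor
          intro a ha
          rcases ha with ⟨h, -⟩ | ⟨h, -⟩ <;> exact hno a h } with hHf
    have hHfle : ∀ i, Hf i ≤ G := by
      intro i a b hab
      rcases hab with ⟨h, -⟩ | ⟨h, -⟩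
      · exact (hor a b).mpr (Or.inl h)
      · exact (hor a b).mpr (Or.inr h)
    set S : Set (SimpleGraph V) := Set.range Hf with hS
    have hmkS : Cardinal.mk S ≤ c := by
      have h1 : Cardinal.mk S ≤ Cardinal.mk c.out := Cardinal.mk_range_le
      rwa [Cardinal.mk_out] at h1
    have hSmem : Cardinal.mk S ∈ RHS := by
      refine ⟨S, ?_, ?_, rfl⟩
      · rintro H ⟨i, rfl⟩
        refine ⟨hHfle i, ?_⟩
        set oi : V → V → Prop := fun a b => ∃ h : o a b, g a ⟨b, h⟩ = i with hoi
        have hori : IsOrientation (Hf i) oi := fun a b => Iff.rfl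
        have hfuni : Functional oi := by
          rintro a y z ⟨hy, hgy⟩ ⟨hz, hgz⟩
          have := (g a).injective (hgy.trans hgz.symm)
          exact congrArg Subtype.val this
        exact functional_isSidewalk' hori hfuni
      · apply le_antisymm
        · apply sSup_le
          rintro H ⟨i, rfl⟩
          exact hHfle i
        · intro a b hab
          rw [SimpleGraph.sSup_adj]
          rcases (hor a b).mp hab with h | h
          · exact ⟨Hf (g a ⟨b, h⟩), ⟨_, rfl⟩, Or.inl ⟨h, rfl⟩⟩
          · exact ⟨Hf (g b ⟨a, h⟩), ⟨_, rfl⟩, Or.inr ⟨h, rfl⟩⟩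
    exact le_trans (csInf_le (OrderBot.bddBelow _) hSmem) hmkS
end

section
/- Flipping an augmenting chain preserves outdegrees at interior vertices: if o is an orientation of a graph G and p = (x₀,...,xₙ) is a directed path in o with distinct vertices, and o' is obtained from o by reversing every edge of p, then for every vertex v not equal to x₀ or xₙ, the outdegree of v under o' equals its outdegree under o; moreover the outdegree of x₀ decreases by 1 and the outdegree of xₙ increases by 1. -/
/-- An orientation giving each edge exactly one direction. -/
def IsStrictOrientation {V : Type*} (G : SimpleGraph V) (o : V → V → Prop) : Prop :=
  IsOrientation G o ∧ ∀ x y, ¬(o x y ∧ o y x)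

/-- Flipping a directed path `x₀, …, xₙ` (with distinct vertices) preserves
outdegrees at interior vertices, decreases the outdegree of `x₀` by one, and
increases the outdegree of `xₙ` by one. -/
theorem flip_augmenting_chain {V : Type*} (G : SimpleGraph V)
    (o o' : V → V → Prop) (ho : IsStrictOrientation G o)
    (n : ℕ) (hn : 1 ≤ n) (x : Fin (n + 1) → V) (hinj : Function.Injective x)
    (hpath : ∀ i : Fin n, o (x i.castSucc) (x i.succ))
    (ho' : ∀ u v, o' u v ↔
      ((∃ i : Fin n, u = x i.succ ∧ v = x i.castSucc) ∨
        (o u v ∧ ¬∃ i : Fin n, u = x i.castSucc ∧ v = x i.succ))) :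
    (∀ v, v ≠ x 0 → v ≠ x (Fin.last n) →
        {w | o' v w}.encard = {w | o v w}.encard) ∧
    {w | o' (x 0) w}.encard + 1 = {w | o (x 0) w}.encard ∧
    {w | o' (x (Fin.last n)) w}.encard = {w | o (x (Fin.last n)) w}.encard + 1 := by
  obtain ⟨hor, hstrict⟩ := ho
  refine ⟨?_, ?_, ?_⟩
  · -- interior vertices
    intro v hv0 hvl
    by_cases hvr : ∃ j : Fin (n+1), v = x j
    · obtain ⟨j, rfl⟩ := hvr
      have hj0 : j ≠ 0 := fun h => hv0 (by rw [h])
      have hjl : j ≠ Fin.last n := fun h => hvl (by rw [h])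
      obtain ⟨k, hk⟩ := Fin.eq_succ_of_ne_zero hj0
      obtain ⟨m, hm'⟩ := Fin.exists_castSucc_eq.mpr hjl
      have hm : j = m.castSucc := hm'.symm
      have hset : {w | o' (x j) w} =
          insert (x k.castSucc) ({w | o (x j) w} \ {x m.succ}) := by
        ext w
        simp only [Set.mem_setOf_eq, Set.mem_insert_iff, Set.mem_diff,
          Set.mem_singleton_iff, ho']
        constructor
        · rintro (⟨i, hi1, hi2⟩ | ⟨how, hnone⟩)
          · left
            have hik : k = i := Fin.succ_injective _ (hinj (hk ▸ hi1))
            rw [hi2, hik]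
          · exact Or.inr ⟨how, fun hw => hnone ⟨m, by rw [hm], hw⟩⟩
        · rintro (rfl | ⟨how, hw⟩)
          · exact Or.inl ⟨k, by rw [hk], rfl⟩
          · refine Or.inr ⟨how, ?_⟩
            rintro ⟨i, hi1, hi2⟩
            have him : m = i := Fin.castSucc_injective _ (hinj (hm ▸ hi1))
            exact hw (him ▸ hi2)
      have hnot : x k.castSucc ∉ {w | o (x j) w} \ {x m.succ} := by
        rintro ⟨h1, -⟩
        exact hstrict _ _ ⟨h1, hk ▸ hpath k⟩
      have hmem : x m.succ ∈ {w | o (x j) w} := by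
        rw [Set.mem_setOf_eq, hm]; exact hpath m
      rw [hset, Set.encard_insert_of_notMem hnot,
        Set.encard_diff_singleton_add_one hmem]
    · have hset : {w | o' v w} = {w | o v w} := by
        ext w
        simp only [Set.mem_setOf_eq, ho']
        constructor
        · rintro (⟨i, hi1, -⟩ | ⟨how, -⟩)
          · exact absurd ⟨i.succ, hi1⟩ hvr
          · exact how
        · intro how
          exact Or.inr ⟨how, fun ⟨i, hi1, _⟩ => hvr ⟨i.castSucc, hi1⟩⟩
      rw [hset]
  · -- x 0
    set i0 : Fin n := ⟨0, hn⟩ with hi0def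
    have h0 : i0.castSucc = 0 := rfl
    have hset : {w | o' (x 0) w} = {w | o (x 0) w} \ {x i0.succ} := by
      ext w
      simp only [Set.mem_setOf_eq, Set.mem_diff, Set.mem_singleton_iff, ho']
      constructor
      · rintro (⟨i, hi1, -⟩ | ⟨how, hnone⟩)
        · exact absurd (hinj hi1).symm (Fin.succ_ne_zero i)
        · exact ⟨how, fun hw => hnone ⟨i0, by rw [h0], hw⟩⟩
      · rintro ⟨how, hw⟩
        refine Or.inr ⟨how, ?_⟩
        rintro ⟨i, hi1, hi2⟩
        have : i = i0 := Fin.castSucc_injective _ ((hinj hi1).symm.trans h0.symm)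
        exact hw (this ▸ hi2)
    have hmem : x i0.succ ∈ {w | o (x 0) w} := by
      rw [Set.mem_setOf_eq, ← h0]; exact hpath i0
    rw [hset, Set.encard_diff_singleton_add_one hmem]
  · -- x (last n)
    set iN : Fin n := ⟨n - 1, by omega⟩ with hiNdef
    have hN : iN.succ = Fin.last n := by
      ext; simp [hiNdef, Fin.last]; omega
    have hset : {w | o' (x (Fin.last n)) w} =
        insert (x iN.castSucc) {w | o (x (Fin.last n)) w} := by
      ext w
      simp only [Set.mem_setOf_eq, Set.mem_insert_iff, ho']
      constructor
      · rintro (⟨i, hi1, hi2⟩ | ⟨how, -⟩)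
        · left
          have : iN = i := Fin.succ_injective _ (hN.trans (hinj hi1))
          rw [hi2, this]
        · exact Or.inr how
      · rintro (rfl | how)
        · exact Or.inl ⟨iN, by rw [hN], rfl⟩
        · refine Or.inr ⟨how, ?_⟩
          rintro ⟨i, hi1, -⟩
          exact (Fin.castSucc_lt_last i).ne' (hinj hi1)
    have hnot : x iN.castSucc ∉ {w | o (x (Fin.last n)) w} := by
      intro h1
      exact hstrict _ _ ⟨h1, hN ▸ hpath iN⟩
    rw [hset, Set.encard_insert_of_notMem hnot]
end

section
/- Let G be a finite graph and k an integer such that for every nonempty A ⊆ V(G), the number of edges of the induced subgraph G↾A is strictly less than k·|A|. Then if an orientation o admits no augmenting chain of length at most n (i.e., no directed path of length ≤ n from a vertex of outdegree > k to a vertex of outdegree < k), the number of vertices of outdegree > k satisfies |O| ≤ (α/k)ⁿ · |V(G)|, where α = max over nonempty A of (edges of G↾A)/|A| < k. In particular, if n is large enough that (α/k)ⁿ·|V(G)| < 1, then every vertex has outdegree ≤ k. -/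
open Classical in
noncomputable def BSet {V : Type*} [Fintype V] (o : V → V → Prop) (k : ℕ) : ℕ → Finset V
  | 0 => Finset.univ.filter (fun v => k < {y | o v y}.ncard)
  | (i+1) => BSet o k i ∪ Finset.univ.filter (fun y => ∃ x ∈ BSet o k i, o x y)

lemma mem_BSet_zero {V : Type*} [Fintype V] {o : V → V → Prop} {k : ℕ} {v : V} :
    v ∈ BSet o k 0 ↔ k < {y | o v y}.ncard := by simp [BSet]

lemma mem_BSet_succ {V : Type*} [Fintype V] {o : V → V → Prop} {k i : ℕ} {y : V} :
    y ∈ BSet o k (i+1) ↔ y ∈ BSet o k i ∨ ∃ x ∈ BSet o k i, o x y := by simp [BSet]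

lemma BSet_subset_succ {V : Type*} [Fintype V] (o : V → V → Prop) (k i : ℕ) :
    BSet o k i ⊆ BSet o k (i+1) := by
  intro v hv; exact mem_BSet_succ.2 (Or.inl hv)

lemma BSet_path {V : Type*} [Fintype V] (o : V → V → Prop) (k : ℕ) :
    ∀ i, ∀ v ∈ BSet o k i, ∃ m ≤ i, ∃ x : ℕ → V,
      (∀ j < m, o (x j) (x (j+1))) ∧ k < {y | o (x 0) y}.ncard ∧ x m = v := by
  intro i
  induction i with
  | zero =>
    intro v hv
    exact ⟨0, le_refl 0, fun _ => v, fun j hj => absurd hj (Nat.not_lt_zero j),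
      mem_BSet_zero.1 hv, rfl⟩
  | succ i ih =>
    intro v hv
    rcases mem_BSet_succ.1 hv with h | ⟨x', hx', hox⟩
    · obtain ⟨m, hm, x, h1, h2, h3⟩ := ih v h
      exact ⟨m, hm.trans (Nat.le_succ i), x, h1, h2, h3⟩
    · obtain ⟨m, hm, x, h1, h2, h3⟩ := ih x' hx'
      refine ⟨m + 1, Nat.succ_le_succ hm, fun j => if j ≤ m then x j else v, ?_, ?_, ?_⟩
      · intro j hj
        rcases Nat.lt_or_ge j m with hjm | hjm
        · simp only [if_pos hjm.le, if_pos (Nat.succ_le_of_lt hjm)]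
          exact h1 j hjm
        · have hjeq : j = m := by omega
          subst hjeq
          simp only [if_pos (le_refl j), if_neg (by omega : ¬ j + 1 ≤ j)]
          rw [h3]; exact hox
      · simpa using h2
      · simp

lemma pairs_card_le_edges {V : Type*} [Fintype V] (G : SimpleGraph V) (o : V → V → Prop)
    (ho : IsStrictOrientation G o) (S : Set V) (P : Finset (V × V))
    (hP : ∀ p ∈ P, o p.1 p.2 ∧ p.1 ∈ S ∧ p.2 ∈ S) :
    P.card ≤ (G.induce S).edgeSet.ncard := by
  classical
  set T : Set (Sym2 V) := {e | ∃ a b, G.Adj a b ∧ a ∈ S ∧ b ∈ S ∧ e = s(a, b)} with hT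
  have hTeq : T = Sym2.map (Subtype.val : S → V) '' (G.induce S).edgeSet := by
    ext e
    constructor
    · rintro ⟨a, b, hab, haS, hbS, rfl⟩
      refine ⟨s(⟨a, haS⟩, ⟨b, hbS⟩), ?_, rfl⟩
      simpa [SimpleGraph.mem_edgeSet] using hab
    · rintro ⟨e', he', rfl⟩
      induction e' using Sym2.inductionOn with
      | hf a b =>
        have hab : G.Adj a.1 b.1 := by simpa [SimpleGraph.mem_edgeSet] using he'
        exact ⟨a.1, b.1, hab, a.2, b.2, rfl⟩
  have hinj : Function.Injective (Sym2.map (Subtype.val : S → V)) :=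
    Sym2.map.injective Subtype.val_injective
  have hTcard : T.ncard = (G.induce S).edgeSet.ncard := by
    rw [hTeq, Set.ncard_image_of_injective _ hinj]
  rw [← hTcard]
  have hfin : T.Finite := Set.toFinite T
  rw [Set.ncard_eq_toFinset_card T hfin]
  apply Finset.card_le_card_of_injOn (fun p => s(p.1, p.2))
  · intro p hp
    obtain ⟨hop, h1, h2⟩ := hP p hp
    rw [Finset.mem_coe, Set.Finite.mem_toFinset]
    exact ⟨p.1, p.2, (ho.1 p.1 p.2).2 (Or.inl hop), h1, h2, rfl⟩
  · intro p hp q hq hpq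
    obtain ⟨hop, _, _⟩ := hP p hp
    obtain ⟨hoq, _, _⟩ := hP q hq
    rw [Sym2.eq_iff] at hpq
    rcases hpq with ⟨h1, h2⟩ | ⟨h1, h2⟩
    · exact Prod.ext h1 h2
    · exfalso; exact ho.2 p.1 p.2 ⟨hop, by rw [← h2, ← h1] at hoq; exact hoq⟩

lemma exists_pairs {V : Type*} [Fintype V] (o : V → V → Prop) (A : Finset V) :
    ∃ P : Finset (V × V), (∀ p ∈ P, p.1 ∈ A ∧ o p.1 p.2) ∧
      P.card = ∑ v ∈ A, {y | o v y}.ncard := by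
  classical
  refine ⟨A.biUnion (fun v => (Finset.univ.filter (fun y => o v y)).image (fun y => (v, y))),
    ?_, ?_⟩
  · intro p hp
    simp only [Finset.mem_biUnion, Finset.mem_image, Finset.mem_filter] at hp
    obtain ⟨v, hv, y, ⟨_, hoy⟩, rfl⟩ := hp
    exact ⟨hv, hoy⟩
  · rw [Finset.card_biUnion]
    · apply Finset.sum_congr rfl
      intro v _
      rw [Finset.card_image_of_injective _ (fun a b h => by simpa using congrArg Prod.snd h)]
      rw [Set.ncard_eq_toFinset_card', Set.toFinset_setOf]
    · intro v _ w _ hvw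
      simp only [Finset.disjoint_left, Finset.mem_image, Finset.mem_filter]
      rintro p ⟨y, _, rfl⟩ ⟨z, _, h⟩
      apply hvw
      have := congrArg Prod.fst h
      simpa using this.symm

/-- If every nonempty `A` spans fewer than `k·|A|` edges, `α` is the maximum
edge density `e(G↾A)/|A| < k`, and the orientation `o` admits no augmenting
chain of length at most `n`, then the set `O` of vertices of outdegree `> k`
satisfies `|O| ≤ (α/k)ⁿ·|V|`; in particular if `(α/k)ⁿ·|V| < 1` then every
vertex has outdegree at most `k`. -/
theorem outdeg_bound_of_no_augmenting_chain {V : Type*} [Finite V]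
    (G : SimpleGraph V) (k n : ℕ) (o : V → V → Prop)
    (ho : IsStrictOrientation G o)
    (hlt : ∀ A : Finset V, A.Nonempty →
      (G.induce (A : Set V)).edgeSet.ncard < k * A.card)
    (α : ℚ)
    (hα : IsGreatest {q : ℚ | ∃ A : Finset V, A.Nonempty ∧
      q = ((G.induce (A : Set V)).edgeSet.ncard : ℚ) / A.card} α)
    (hαk : α < k)
    (haug : ¬∃ (m : ℕ) (x : ℕ → V), m ≤ n ∧ (∀ i < m, o (x i) (x (i + 1))) ∧
      k < {y | o (x 0) y}.ncard ∧ {y | o (x m) y}.ncard < k) :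
    (({v | k < {y | o v y}.ncard} : Set V).ncard : ℚ) ≤ (α / k) ^ n * Nat.card V ∧
      ((α / k) ^ n * (Nat.card V : ℚ) < 1 → ∀ v, {y | o v y}.ncard ≤ k) := by
  classical
  cases nonempty_fintype V
  obtain ⟨⟨A0, hA0ne, hA0eq⟩, hub⟩ := hα
  have hk1 : 1 ≤ k := by
    have h := hlt A0 hA0ne
    by_contra hc
    push_neg at hc
    interval_cases k
    simp at h
  have hα0 : 0 ≤ α := by
    rw [hA0eq]; positivity
  have hkQ : (0 : ℚ) < k := by exact_mod_cast hk1
  -- all vertices reachable in ≤ n steps have outdegree ≥ k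
  have hdeg : ∀ i ≤ n, ∀ v ∈ BSet o k i, k ≤ {y | o v y}.ncard := by
    intro i hi v hv
    by_contra h
    push_neg at h
    obtain ⟨m, hm, x, h1, h2, h3⟩ := BSet_path o k i v hv
    exact haug ⟨m, x, hm.trans hi, h1, h2, by rw [h3]; exact h⟩
  -- counting step in ℕ
  have hstepN : ∀ i < n, k * (BSet o k i).card ≤
      (G.induce ((BSet o k (i+1) : Finset V) : Set V)).edgeSet.ncard := by
    intro i hi
    obtain ⟨P, hPmem, hPcard⟩ := exists_pairs o (BSet o k i)
    have h1 : k * (BSet o k i).card ≤ P.card := by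
      rw [hPcard]
      calc k * (BSet o k i).card = ∑ _v ∈ BSet o k i, k := by
            rw [Finset.sum_const, smul_eq_mul, mul_comm]
        _ ≤ ∑ v ∈ BSet o k i, {y | o v y}.ncard :=
            Finset.sum_le_sum (fun v hv => hdeg i hi.le v hv)
    refine h1.trans (pairs_card_le_edges G o ho _ P ?_)
    intro p hp
    obtain ⟨hpB, hop⟩ := hPmem p hp
    refine ⟨hop, ?_, ?_⟩
    · exact Finset.mem_coe.2 (BSet_subset_succ o k i hpB)
    · exact Finset.mem_coe.2 (mem_BSet_succ.2 (Or.inr ⟨p.1, hpB, hop⟩))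
  -- density upper bound
  have hupper : ∀ j : ℕ, ((G.induce ((BSet o k j : Finset V) : Set V)).edgeSet.ncard : ℚ)
      ≤ α * (BSet o k j).card := by
    intro j
    rcases (BSet o k j).eq_empty_or_nonempty with he | hne
    · rw [he]
      have he0 : (G.induce (((∅ : Finset V) : Set V))).edgeSet = ∅ := by
        ext e
        induction e using Sym2.inductionOn with
        | hf a b => exact iff_of_false (fun _ => by simpa using a.2) (by simp)
      rw [he0]
      simp
    · have h := hub ⟨BSet o k j, hne, rfl⟩
      have hpos : (0 : ℚ) < (BSet o k j).card := by
        exact_mod_cast hne.card_pos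
      rw [div_le_iff₀ hpos] at h
      linarith [h]
  -- combined step in ℚ
  have key : ∀ i < n, (k : ℚ) * (BSet o k i).card ≤ α * (BSet o k (i+1)).card := by
    intro i hi
    have h1 := hstepN i hi
    have h2 := hupper (i+1)
    have h1' : ((k * (BSet o k i).card : ℕ) : ℚ)
        ≤ ((G.induce ((BSet o k (i+1) : Finset V) : Set V)).edgeSet.ncard : ℚ) := by
      exact_mod_cast h1
    push_cast at h1'
    exact h1'.trans h2
  -- geometric iteration
  have geom : ∀ i ≤ n, (k : ℚ)^i * (BSet o k 0).card ≤ α^i * (BSet o k i).card := by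
    intro i
    induction i with
    | zero => intro _; simp
    | succ i ih =>
      intro hi
      have h1 := ih (Nat.le_of_succ_le hi)
      have h2 := key i hi
      have hαi : (0 : ℚ) ≤ α ^ i := pow_nonneg hα0 i
      calc (k : ℚ)^(i+1) * (BSet o k 0).card
          = (k : ℚ) * ((k : ℚ)^i * (BSet o k 0).card) := by ring
        _ ≤ (k : ℚ) * (α^i * (BSet o k i).card) := by
            apply mul_le_mul_of_nonneg_left h1 hkQ.le
        _ = α^i * ((k : ℚ) * (BSet o k i).card) := by ring
        _ ≤ α^i * (α * (BSet o k (i+1)).card) := by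
            apply mul_le_mul_of_nonneg_left h2 hαi
        _ = α^(i+1) * (BSet o k (i+1)).card := by ring
  have hcV : ((BSet o k n).card : ℚ) ≤ (Nat.card V : ℚ) := by
    rw [Nat.card_eq_fintype_card]
    exact_mod_cast Finset.card_le_univ _
  have main : ((BSet o k 0).card : ℚ) ≤ (α / k) ^ n * Nat.card V := by
    have h1 := geom n le_rfl
    have h2 : α^n * ((BSet o k n).card : ℚ) ≤ α^n * (Nat.card V : ℚ) :=
      mul_le_mul_of_nonneg_left hcV (pow_nonneg hα0 n)
    have h3 : (k : ℚ)^n * (BSet o k 0).card ≤ α^n * (Nat.card V : ℚ) := h1.trans h2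
    rw [div_pow, div_mul_eq_mul_div, le_div_iff₀ (pow_pos hkQ n)]
    linarith [h3]
  have hOset : ({v | k < {y | o v y}.ncard} : Set V) = ↑(BSet o k 0) := by
    ext v
    simp only [Set.mem_setOf_eq, Finset.mem_coe, mem_BSet_zero]
  constructor
  · rw [hOset, Set.ncard_coe_finset]
    exact main
  · intro hsmall v
    by_contra h
    push_neg at h
    have hv : v ∈ BSet o k 0 := mem_BSet_zero.2 h
    have h1 : (1 : ℚ) ≤ (BSet o k 0).card := by
      exact_mod_cast Finset.card_pos.2 ⟨v, hv⟩
    linarith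
end

section
/- Every finite graph G with max over nonempty A ⊆ V(G) of ⌈e(G↾A)/|A|⌉ ≤ k admits an orientation with all outdegrees at most k, where e(G↾A) denotes the number of edges of the induced subgraph on A. (Hakimi orientation theorem, the finite analogue of the paper's main theorem.) -/
lemma hakimi_aux {V : Type*} [Finite V] (G : SimpleGraph V) (A : Finset V)
    (s : Finset (Sym2 V)) (hs : ∀ e ∈ s, e ∈ G.edgeSet ∧ ∀ v ∈ e, v ∈ A) :
    s.card ≤ (G.induce (A : Set V)).edgeSet.ncard := by
  classical
  set As : Set V := (A : Set V) with hAs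
  set T : Set (Sym2 V) :=
    Sym2.map (Subtype.val : As → V) '' (G.induce (A : Set V)).edgeSet with hT
  have hsub : (s : Set (Sym2 V)) ⊆ T := by
    intro e he
    induction e using Sym2.ind with
    | _ a b =>
      obtain ⟨hadj, hmem⟩ := hs _ he
      have ha : a ∈ A := hmem a (by simp)
      have hb : b ∈ A := hmem b (by simp)
      refine ⟨s(⟨a, by simpa [hAs] using ha⟩, ⟨b, by simpa [hAs] using hb⟩), ?_, ?_⟩
      · simpa [SimpleGraph.mem_edgeSet] using (SimpleGraph.mem_edgeSet G).mp hadj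
      · simp [Sym2.map_pair_eq]
  have hfin : T.Finite := Set.Finite.image _ (Set.toFinite _)
  calc s.card = (s : Set (Sym2 V)).ncard := (Set.ncard_coe_finset s).symm
    _ ≤ T.ncard := Set.ncard_le_ncard hsub hfin
    _ = (G.induce (A : Set V)).edgeSet.ncard :=
        Set.ncard_image_of_injective _ (Sym2.map.injective Subtype.val_injective)

/-- Hakimi's orientation theorem: if `⌈e(G↾A)/|A|⌉ ≤ k` for every nonempty
vertex set `A` of a finite graph, then `G` admits an orientation with all
outdegrees at most `k`. -/
theorem hakimi_orientation {V : Type*} [Finite V] (G : SimpleGraph V) (k : ℕ)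
    (hk : ∀ A : Finset V, A.Nonempty →
      ((G.induce (A : Set V)).edgeSet.ncard + A.card - 1) / A.card ≤ k) :
    ∃ o : V → V → Prop, IsStrictOrientation G o ∧ ∀ x, {y | o x y}.ncard ≤ k := by
  classical
  have : Fintype V := Fintype.ofFinite V
  -- Hall setup
  set ι := {e : Sym2 V // e ∈ G.edgeFinset} with hι
  set t : ι → Finset (V × Fin k) :=
    fun e => (Finset.univ.filter (· ∈ e.1)) ×ˢ Finset.univ with ht
  have hall : ∀ s : Finset ι, s.card ≤ (s.biUnion t).card := by
    intro s
    rcases s.eq_empty_or_nonempty with rfl | hne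
    · simp
    set A : Finset V := s.biUnion (fun e => Finset.univ.filter (· ∈ e.1)) with hA
    have hAne : A.Nonempty := by
      obtain ⟨e, he⟩ := hne
      obtain ⟨a, ha⟩ : ∃ a, a ∈ e.1 := by
        induction e.1 using Sym2.ind with
        | _ a b => exact ⟨a, by simp⟩
      exact ⟨a, Finset.mem_biUnion.mpr ⟨e, he, by simp [ha]⟩⟩
    have hbi : s.biUnion t = A ×ˢ Finset.univ := by
      ext ⟨v, i⟩
      simp [ht, hA, Finset.mem_biUnion]
    have hcard : (s.biUnion t).card = A.card * k := by
      rw [hbi, Finset.card_product]; simp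
    -- bound the number of edges
    have hA1 : 1 ≤ A.card := hAne.card_pos
    have hdiv := hk A hAne
    have hle : (G.induce (A : Set V)).edgeSet.ncard ≤ A.card * k := by
      have h2 := (Nat.div_le_iff_le_mul_add_pred hAne.card_pos).mp hdiv
      omega
    have hinj : s.card = (s.image (Subtype.val)).card :=
      (Finset.card_image_of_injective s Subtype.val_injective).symm
    have hcount : (s.image Subtype.val).card ≤ (G.induce (A : Set V)).edgeSet.ncard := by
      apply hakimi_aux
      intro e he
      obtain ⟨⟨e', he'⟩, hes, rfl⟩ := Finset.mem_image.mp he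
      refine ⟨(SimpleGraph.mem_edgeFinset).mp he', fun v hv => ?_⟩
      exact Finset.mem_biUnion.mpr ⟨⟨e', he'⟩, hes, by simp [hv]⟩
    rw [hcard]
    calc s.card = (s.image Subtype.val).card := hinj
      _ ≤ (G.induce (A : Set V)).edgeSet.ncard := hcount
      _ ≤ A.card * k := hle
  obtain ⟨f, hfinj, hf⟩ := (Finset.all_card_le_biUnion_card_iff_exists_injective t).mp hall
  -- define the orientation
  have hmemEF : ∀ {x y : V}, G.Adj x y → s(x, y) ∈ G.edgeFinset := fun h =>
    SimpleGraph.mem_edgeFinset.mpr ((SimpleGraph.mem_edgeSet G).mpr h)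
  set o : V → V → Prop :=
    fun x y => ∃ h : G.Adj x y, (f ⟨s(x, y), hmemEF h⟩).1 = x with ho
  have hfmem : ∀ e : ι, (f e).1 ∈ e.1 := by
    intro e
    have := hf e
    rw [ht] at this
    simp only [Finset.mem_product, Finset.mem_filter] at this
    exact this.1.2
  refine ⟨o, ⟨?_, ?_⟩, ?_⟩
  · intro x y
    constructor
    · intro h
      have hm := hfmem ⟨s(x, y), hmemEF h⟩
      rw [Sym2.mem_iff] at hm
      rcases hm with hm | hm
      · exact Or.inl ⟨h, hm⟩
      · refine Or.inr ⟨h.symm, ?_⟩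
        have : (⟨s(y, x), hmemEF h.symm⟩ : ι) = ⟨s(x, y), hmemEF h⟩ :=
          Subtype.ext (Sym2.eq_swap)
        rw [this]; exact hm
    · rintro (⟨h, _⟩ | ⟨h, _⟩)
      · exact h
      · exact h.symm
  · rintro x y ⟨⟨hxy, hx⟩, ⟨hyx, hy⟩⟩
    have : (⟨s(y, x), hmemEF hyx⟩ : ι) = ⟨s(x, y), hmemEF hxy⟩ :=
      Subtype.ext (Sym2.eq_swap)
    rw [this] at hy
    exact hxy.ne (hx.symm.trans hy)
  · intro x
    set S := {y | o x y} with hS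
    set g : V → ℕ := fun y =>
      if h : s(x, y) ∈ G.edgeFinset then ((f ⟨s(x, y), h⟩).2 : ℕ) else 0 with hg
    have hinjOn : Set.InjOn g S := by
      rintro y ⟨hy, hy1⟩ y' ⟨hy', hy1'⟩ hgy
      have hey : s(x, y) ∈ G.edgeFinset := hmemEF hy
      have hey' : s(x, y') ∈ G.edgeFinset := hmemEF hy'
      rw [hg] at hgy
      simp only [dif_pos hey, dif_pos hey'] at hgy
      have h2 : (f ⟨s(x, y), hey⟩).2 = (f ⟨s(x, y'), hey'⟩).2 := Fin.ext hgy
      have h1 : (f ⟨s(x, y), hey⟩).1 = (f ⟨s(x, y'), hey'⟩).1 := by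
        rw [hy1, hy1']
      have hfe : f ⟨s(x, y), hey⟩ = f ⟨s(x, y'), hey'⟩ := Prod.ext h1 h2
      have := hfinj hfe
      have hee : s(x, y) = s(x, y') := congrArg Subtype.val this
      rw [Sym2.eq_iff] at hee
      rcases hee with ⟨_, rfl⟩ | ⟨h1', h2'⟩
      · rfl
      · exact absurd h1' hy'.ne
    have himg : g '' S ⊆ (Finset.range k : Finset ℕ) := by
      rintro n ⟨y, ⟨hy, _⟩, rfl⟩
      have hey : s(x, y) ∈ G.edgeFinset := hmemEF hy
      simp only [hg, dif_pos hey, Finset.coe_range, Set.mem_Iio]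
      exact (f ⟨s(x, y), hey⟩).2.isLt
    calc S.ncard = (g '' S).ncard := (Set.ncard_image_of_injOn hinjOn).symm
      _ ≤ ((Finset.range k : Finset ℕ) : Set ℕ).ncard :=
          Set.ncard_le_ncard himg (Set.toFinite _)
      _ = k := by rw [Set.ncard_coe_finset, Finset.card_range]
end

section
/- Let Γ = (ℤ/2ℤ) ∗ (ℤ/2ℤ) = ⟨a,b : a² = b² = 1⟩ act freely on a standard probability space (X,μ) by measure-preserving transformations, and let G be the graph connecting x to a·x and to b·x. Then G admits no μ-measurable orientation with all outdegrees at most 1, provided the transformation ab acts ergodically. (Each component of G is a bi-infinite path; a measurable 1-orientation would give an (ab)-invariant measurable set A = {x : (x, a·x) ∈ o} that is neither null nor conull, contradicting ergodicity.) -/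
open MeasureTheory

/-- The Cayley graph of a free ergodic p.m.p. action of the infinite dihedral
group `⟨a, b : a² = b² = 1⟩` (with `ab` ergodic) admits no measurable
orientation, defined almost everywhere, with all outdegrees at most 1. -/
theorem no_measurable_one_orientation_dihedral {X : Type*} [MeasurableSpace X]
    (μ : Measure X) [IsProbabilityMeasure μ]
    (a b : X → X) (hma : Measurable a) (hmb : Measurable b)
    (hpa : MeasurePreserving a μ μ) (hpb : MeasurePreserving b μ μ)
    (haa : a ∘ a = id) (hbb : b ∘ b = id)
    (hfree : ∀ x : X, (∀ n : ℕ, n ≠ 0 → (a ∘ b)^[n] x ≠ x) ∧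
      (∀ n : ℕ, a ((b ∘ a)^[n] x) ≠ x ∧ b ((a ∘ b)^[n] x) ≠ x))
    (herg : Ergodic (a ∘ b) μ)
    (G : SimpleGraph X) (hG : ∀ x y, G.Adj x y ↔ x ≠ y ∧ (y = a x ∨ y = b x)) :
    ¬∃ (A : Set X) (o : X → X → Prop),
        MeasurableSet A ∧ μ Aᶜ = 0 ∧
        MeasurableSet {x | o x (a x)} ∧ MeasurableSet {x | o x (b x)} ∧
        (∀ x ∈ A, ∀ y ∈ A, (G.Adj x y ↔ (o x y ∨ o y x))) ∧
        (∀ x, {y | o x y}.encard ≤ 1) := by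
  rintro ⟨A, o, hA, hAc, hSm, hTm, hor, hout⟩
  set S := {x | o x (a x)} with hSdef
  set T := {x | o x (b x)} with hTdef
  have ha2 : ∀ x, a (a x) = x := fun x => congrFun haa x
  have hb2 : ∀ x, b (b x) = x := fun x => congrFun hbb x
  have hax : ∀ x, a x ≠ x := fun x => by
    have := ((hfree x).2 0).1
    simpa using this
  have hbx : ∀ x, b x ≠ x := fun x => by
    have := ((hfree x).2 0).2
    simpa using this
  have hab : ∀ x, a x ≠ b x := by
    intro x h
    apply (hfree x).1 1 one_ne_zero
    have : (a ∘ b)^[1] x = a (b x) := by simp [Function.comp]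
    rw [this, ← h, ha2]
  -- the a-edge and b-edge at every point of A (with neighbor in A) is oriented
  have hSa : ∀ x, x ∈ A → a x ∈ A → (x ∈ S ∨ a x ∈ S) := by
    intro x hx hx'
    have hadj : G.Adj x (a x) := (hG x (a x)).2 ⟨(hax x).symm, Or.inl rfl⟩
    rcases (hor x hx (a x) hx').1 hadj with h | h
    · exact Or.inl h
    · right
      show o (a x) (a (a x))
      rw [ha2]; exact h
  have hTb : ∀ x, x ∈ A → b x ∈ A → (x ∈ T ∨ b x ∈ T) := by
    intro x hx hx'
    have hadj : G.Adj x (b x) := (hG x (b x)).2 ⟨(hbx x).symm, Or.inr rfl⟩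
    rcases (hor x hx (b x) hx').1 hadj with h | h
    · exact Or.inl h
    · right
      show o (b x) (b (b x))
      rw [hb2]; exact h
  -- no point emits both edges
  have hST : ∀ x, x ∈ S → x ∈ T → False := by
    intro x h1 h2
    have : 1 < {y | o x y}.encard :=
      Set.one_lt_encard_iff.2 ⟨a x, b x, h1, h2, hab x⟩
    exact absurd (hout x) this.not_ge
  -- helper: preimages of null sets are null
  have hpba : MeasurePreserving (b ∘ a) μ μ := hpb.comp hpa
  have hpab : MeasurePreserving (a ∘ b) μ μ := hpa.comp hpb
  have hAc' : ∀ {f : X → X}, MeasurePreserving f μ μ → μ (f ⁻¹' Aᶜ) = 0 := by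
    intro f hf
    rw [hf.measure_preimage hA.compl.nullMeasurableSet]; exact hAc
  -- measure of S and T
  have hcovS : (Set.univ : Set X) ⊆ (S ∪ a ⁻¹' S) ∪ (Aᶜ ∪ a ⁻¹' Aᶜ) := by
    intro x _
    by_cases hx : x ∈ A
    · by_cases hx' : a x ∈ A
      · rcases hSa x hx hx' with h | h
        · exact Or.inl (Or.inl h)
        · exact Or.inl (Or.inr h)
      · exact Or.inr (Or.inr hx')
    · exact Or.inr (Or.inl hx)
  have hcovT : (Set.univ : Set X) ⊆ (T ∪ b ⁻¹' T) ∪ (Aᶜ ∪ b ⁻¹' Aᶜ) := by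
    intro x _
    by_cases hx : x ∈ A
    · by_cases hx' : b x ∈ A
      · rcases hTb x hx hx' with h | h
        · exact Or.inl (Or.inl h)
        · exact Or.inl (Or.inr h)
      · exact Or.inr (Or.inr hx')
    · exact Or.inr (Or.inl hx)
  have hnullAS : μ (Aᶜ ∪ a ⁻¹' Aᶜ) = 0 :=
    le_antisymm (le_trans (measure_union_le _ _) (by rw [hAc, hAc' hpa]; simp)) zero_le
  have hnullAT : μ (Aᶜ ∪ b ⁻¹' Aᶜ) = 0 :=
    le_antisymm (le_trans (measure_union_le _ _) (by rw [hAc, hAc' hpb]; simp)) zero_le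
  have hUS : 1 ≤ μ (S ∪ a ⁻¹' S) := by
    calc (1 : ENNReal) = μ Set.univ := measure_univ.symm
    _ ≤ μ ((S ∪ a ⁻¹' S) ∪ (Aᶜ ∪ a ⁻¹' Aᶜ)) := measure_mono hcovS
    _ ≤ μ (S ∪ a ⁻¹' S) + μ (Aᶜ ∪ a ⁻¹' Aᶜ) := measure_union_le _ _
    _ = μ (S ∪ a ⁻¹' S) := by rw [hnullAS, add_zero]
  have hUT : 1 ≤ μ (T ∪ b ⁻¹' T) := by
    calc (1 : ENNReal) = μ Set.univ := measure_univ.symm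
    _ ≤ μ ((T ∪ b ⁻¹' T) ∪ (Aᶜ ∪ b ⁻¹' Aᶜ)) := measure_mono hcovT
    _ ≤ μ (T ∪ b ⁻¹' T) + μ (Aᶜ ∪ b ⁻¹' Aᶜ) := measure_union_le _ _
    _ = μ (T ∪ b ⁻¹' T) := by rw [hnullAT, add_zero]
  have hpreS : μ (a ⁻¹' S) = μ S := hpa.measure_preimage hSm.nullMeasurableSet
  have hpreT : μ (b ⁻¹' T) = μ T := hpb.measure_preimage hTm.nullMeasurableSet
  have heqS : μ (S ∪ a ⁻¹' S) + μ (S ∩ a ⁻¹' S) = μ S + μ S := by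
    rw [measure_union_add_inter S (hma hSm), hpreS]
  have heqT : μ (T ∪ b ⁻¹' T) + μ (T ∩ b ⁻¹' T) = μ T + μ T := by
    rw [measure_union_add_inter T (hmb hTm), hpreT]
  have hdisjST : Disjoint S T := by
    rw [Set.disjoint_left]; exact fun x h1 h2 => hST x h1 h2
  have hsum : μ S + μ T ≤ 1 := by
    rw [← measure_union hdisjST hTm]
    exact prob_le_one
  -- pass to real numbers
  set s := (μ S).toReal with hs_def
  set t := (μ T).toReal with ht_def
  have hfin : ∀ (B : Set X), μ B ≠ ⊤ := fun B => measure_ne_top μ B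
  have h2s : 1 ≤ s + s := by
    have h1 : (1 : ENNReal) ≤ μ S + μ S :=
      le_trans hUS (le_trans le_self_add heqS.le)
    calc (1 : ℝ) = (1 : ENNReal).toReal := by simp
    _ ≤ (μ S + μ S).toReal := ENNReal.toReal_le_toReal (by simp)
        (by simp [hfin]) |>.2 h1
    _ = s + s := ENNReal.toReal_add (hfin S) (hfin S)
  have h2t : 1 ≤ t + t := by
    have h1 : (1 : ENNReal) ≤ μ T + μ T :=
      le_trans hUT (le_trans le_self_add heqT.le)
    calc (1 : ℝ) = (1 : ENNReal).toReal := by simp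
    _ ≤ (μ T + μ T).toReal := ENNReal.toReal_le_toReal (by simp)
        (by simp [hfin]) |>.2 h1
    _ = t + t := ENNReal.toReal_add (hfin T) (hfin T)
  have hst : s + t ≤ 1 := by
    calc s + t = (μ S + μ T).toReal := (ENNReal.toReal_add (hfin S) (hfin T)).symm
    _ ≤ (1 : ENNReal).toReal := ENNReal.toReal_le_toReal (by simp [hfin]) (by simp) |>.2 hsum
    _ = 1 := by simp
  have hs_half : s = 1 / 2 := by linarith
  have ht_half : t = 1 / 2 := by linarith
  have hμS : μ S = ENNReal.ofReal (1 / 2) := by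
    rw [← hs_half, hs_def, ENNReal.ofReal_toReal (hfin S)]
  have hμT : μ T = ENNReal.ofReal (1 / 2) := by
    rw [← ht_half, ht_def, ENNReal.ofReal_toReal (hfin T)]
  -- the intersections S ∩ a⁻¹S and T ∩ b⁻¹T are null
  have hiS : μ (S ∩ a ⁻¹' S) = 0 := by
    have hU1 : μ (S ∪ a ⁻¹' S) = 1 :=
      le_antisymm prob_le_one hUS
    have : μ (S ∪ a ⁻¹' S) + μ (S ∩ a ⁻¹' S) = 1 := by
      rw [heqS, hμS, ← ENNReal.ofReal_add (by norm_num) (by norm_num)]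
      norm_num
    rw [hU1] at this
    have h1 : (1 : ENNReal) + μ (S ∩ a ⁻¹' S) = 1 + 0 := by rw [add_zero]; exact this
    exact (ENNReal.add_right_inj (by simp)).1 h1
  have hiT : μ (T ∩ b ⁻¹' T) = 0 := by
    have hU1 : μ (T ∪ b ⁻¹' T) = 1 :=
      le_antisymm prob_le_one hUT
    have : μ (T ∪ b ⁻¹' T) + μ (T ∩ b ⁻¹' T) = 1 := by
      rw [heqT, hμT, ← ENNReal.ofReal_add (by norm_num) (by norm_num)]
      norm_num
    rw [hU1] at this
    have h1 : (1 : ENNReal) + μ (T ∩ b ⁻¹' T) = 1 + 0 := by rw [add_zero]; exact this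
    exact (ENNReal.add_right_inj (by simp)).1 h1
  -- Sᶜ ∩ Tᶜ is null
  have hiC : μ (Sᶜ ∩ Tᶜ) = 0 := by
    have hST1 : μ (S ∪ T) = 1 := by
      rw [measure_union hdisjST hTm, hμS, hμT,
        ← ENNReal.ofReal_add (by norm_num) (by norm_num)]
      norm_num
    have := measure_add_measure_compl (μ := μ) (hSm.union hTm)
    rw [hST1, measure_univ] at this
    have h1 : (1 : ENNReal) + μ ((S ∪ T)ᶜ) = 1 + 0 := by rw [add_zero]; exact this
    have h2 : μ ((S ∪ T)ᶜ) = 0 := (ENNReal.add_right_inj (by simp)).1 h1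
    rwa [Set.compl_union] at h2
  -- the bad set M
  set M : Set X := (S ∩ a ⁻¹' S) ∪ a ⁻¹' (Sᶜ ∩ Tᶜ) ∪ a ⁻¹' (T ∩ b ⁻¹' T) ∪
      (b ∘ a) ⁻¹' (Sᶜ ∩ Tᶜ) ∪ (Aᶜ ∪ a ⁻¹' Aᶜ ∪ (b ∘ a) ⁻¹' Aᶜ) with hMdef
  have hCm : MeasurableSet (Sᶜ ∩ Tᶜ) := hSm.compl.inter hTm.compl
  have hM : μ M = 0 := by
    have h1 : μ (a ⁻¹' (Sᶜ ∩ Tᶜ)) = 0 := by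
      rw [hpa.measure_preimage hCm.nullMeasurableSet]; exact hiC
    have h2 : μ (a ⁻¹' (T ∩ b ⁻¹' T)) = 0 := by
      rw [hpa.measure_preimage (hTm.inter (hmb hTm)).nullMeasurableSet]; exact hiT
    have h3 : μ ((b ∘ a) ⁻¹' (Sᶜ ∩ Tᶜ)) = 0 := by
      rw [hpba.measure_preimage hCm.nullMeasurableSet]; exact hiC
    have h4 : μ (Aᶜ ∪ a ⁻¹' Aᶜ ∪ (b ∘ a) ⁻¹' Aᶜ) = 0 := by
      refine le_antisymm (le_trans (measure_union_le _ _) ?_) zero_le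
      rw [hAc' hpba, hnullAS, add_zero]
    refine le_antisymm ?_ zero_le
    calc μ M ≤ μ ((S ∩ a ⁻¹' S) ∪ a ⁻¹' (Sᶜ ∩ Tᶜ) ∪ a ⁻¹' (T ∩ b ⁻¹' T) ∪
        (b ∘ a) ⁻¹' (Sᶜ ∩ Tᶜ)) + μ (Aᶜ ∪ a ⁻¹' Aᶜ ∪ (b ∘ a) ⁻¹' Aᶜ) := measure_union_le _ _
    _ ≤ (μ ((S ∩ a ⁻¹' S) ∪ a ⁻¹' (Sᶜ ∩ Tᶜ) ∪ a ⁻¹' (T ∩ b ⁻¹' T)) +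
        μ ((b ∘ a) ⁻¹' (Sᶜ ∩ Tᶜ))) + 0 := by
      rw [h4]; exact add_le_add (measure_union_le _ _) le_rfl
    _ ≤ ((μ ((S ∩ a ⁻¹' S) ∪ a ⁻¹' (Sᶜ ∩ Tᶜ)) + μ (a ⁻¹' (T ∩ b ⁻¹' T))) + 0) + 0 := by
      rw [h3]; exact add_le_add (add_le_add (measure_union_le _ _) le_rfl) le_rfl
    _ ≤ (((μ (S ∩ a ⁻¹' S) + μ (a ⁻¹' (Sᶜ ∩ Tᶜ))) + 0) + 0) + 0 := by
      rw [h2]; exact add_le_add (add_le_add (add_le_add (measure_union_le _ _) le_rfl) le_rfl) le_rfl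
    _ = 0 := by rw [hiS, h1]; simp
  -- pointwise: off M, membership in S is invariant under b ∘ a
  have hkey : ∀ x, x ∉ M → (x ∈ S ↔ b (a x) ∈ S) := by
    intro x hxM
    have hxA : x ∈ A := by
      by_contra h
      exact hxM (Or.inr (Or.inl (Or.inl h)))
    have haxA : a x ∈ A := by
      by_contra h
      exact hxM (Or.inr (Or.inl (Or.inr h)))
    have hbaxA : b (a x) ∈ A := by
      by_contra h
      exact hxM (Or.inr (Or.inr h))
    have hn1 : ¬(x ∈ S ∧ a x ∈ S) := fun h => hxM (Or.inl (Or.inl (Or.inl (Or.inl ⟨h.1, h.2⟩))))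
    have hn2 : ¬(a x ∉ S ∧ a x ∉ T) := fun h => hxM (Or.inl (Or.inl (Or.inl (Or.inr ⟨h.1, h.2⟩))))
    have hn3 : ¬(a x ∈ T ∧ b (a x) ∈ T) := fun h => hxM (Or.inl (Or.inl (Or.inr ⟨h.1, h.2⟩)))
    have hn4 : ¬(b (a x) ∉ S ∧ b (a x) ∉ T) := fun h => hxM (Or.inl (Or.inr ⟨h.1, h.2⟩))
    constructor
    · intro hxS
      have h1 : a x ∉ S := fun h => hn1 ⟨hxS, h⟩
      have h2 : a x ∈ T := by
        by_contra h
        exact hn2 ⟨h1, h⟩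
      have h3 : b (a x) ∉ T := fun h => hn3 ⟨h2, h⟩
      by_contra h
      exact hn4 ⟨h, h3⟩
    · intro hbaxS
      have h1 : b (a x) ∉ T := fun h => hST _ hbaxS h
      have h2 : a x ∈ T := by
        rcases hTb (a x) haxA hbaxA with h | h
        · exact h
        · exact absurd h h1
      have h3 : a x ∉ S := fun h => hST _ h h2
      rcases hSa x hxA haxA with h | h
      · exact h
      · exact absurd h h3
  -- S is almost invariant under a ∘ b
  have hinv : (a ∘ b) ⁻¹' S =ᵐ[μ] S := by
    have hMn : ∀ᵐ x ∂μ, x ∉ (a ∘ b) ⁻¹' M := by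
      rw [← measure_eq_zero_iff_ae_notMem, hpab.measure_preimage]
      · exact hM
      · refine (MeasurableSet.nullMeasurableSet ?_)
        apply MeasurableSet.union
        apply MeasurableSet.union
        apply MeasurableSet.union
        apply MeasurableSet.union
        · exact hSm.inter (hma hSm)
        · exact hma hCm
        · exact hma (hTm.inter (hmb hTm))
        · exact (hmb.comp hma) hCm
        · exact (hA.compl.union (hma hA.compl)).union ((hmb.comp hma) hA.compl)
    rw [Filter.eventuallyEq_set]
    filter_upwards [hMn] with x hx
    have := (hkey (a (b x)) hx).symm
    have heq : b (a (a (b x))) = x := by rw [ha2, hb2]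
    rw [heq] at this
    exact this.symm
  -- conclude by ergodicity
  have hSnull : NullMeasurableSet S μ := hSm.nullMeasurableSet
  rcases herg.quasiErgodic.ae_empty_or_univ₀ hSnull hinv with h | h
  · have : μ S = 0 := by rwa [ae_eq_empty] at h
    rw [hμS] at this
    norm_num at this
  · have hc : μ Sᶜ = 0 := by rwa [ae_eq_univ] at h
    have : μ T ≤ μ Sᶜ := measure_mono (fun x hx => Set.disjoint_right.1 hdisjST hx)
    rw [hμT, hc] at this
    norm_num at this
end
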